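/- arXiv:2110.11655 — 5 statements merged into one kernel-verified Lean document; each statement's English description precedes it below -/
import Mathlib

section
/- Let k be a commutative ring, let U and V be groups, let A be a subgroup of U, let α : A → V be an injective group homomorphism, and let W = U *_A V be the amalgamated free product (the pushout of the inclusion A → U and α : A → V). Then there is an exact sequence of left kW-modules 0 → kI_A^W →γ kI_U^W ⊕ kI_V^W →p kI_W → 0, where γ(a) = (a, −a) for a ∈ kI_A^W and p(b, c) = b + c; that is, γ is injective, the image of γ equals the kernel of p, and p maps kI_U^W ⊕ kI_V^W onto kI_W. -/
/-- The augmentation homomorphism `kG → k` sending each group element to `1`. -/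
noncomputable def augHom (k : Type*) [CommRing k] (G : Type*) [Group G] :
    MonoidAlgebra k G →ₐ[k] k :=
  MonoidAlgebra.lift k k G 1

/-- The augmentation ideal `kI_G` of the group algebra `kG`: the kernel of the augmentation. -/
noncomputable def augIdeal (k : Type*) [CommRing k] (G : Type*) [Group G] :
    Ideal (MonoidAlgebra k G) :=
  RingHom.ker (augHom k G).toRingHom

/-- For a subgroup `H ≤ G`, the left ideal `kI_H^G` of `kG` generated by the elements `h - 1`
for `h ∈ H`. -/
noncomputable def relAugIdeal (k : Type*) [CommRing k] {G : Type*} [Group G]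
    (H : Subgroup G) : Ideal (MonoidAlgebra k G) :=
  Ideal.span ((fun h => MonoidAlgebra.of k G h - 1) '' (H : Set G))

/-- The amalgamated free product `U *_A V` along a subgroup `A ≤ U` and a monomorphism
`α : A → V`: the pushout of the inclusion `A → U` and `α`, realized as the quotient of the
free product `U * V` by the normal closure of the elements `a·α(a)⁻¹` for `a ∈ A`. -/
def AmalgamatedProduct (U V : Type*) [Group U] [Group V] (A : Subgroup U) (α : A →* V) :=
  Monoid.Coprod U V ⧸
    Subgroup.normalClosure
      {x : Monoid.Coprod U V |
        ∃ a : A, x = Monoid.Coprod.inl (a : U) * (Monoid.Coprod.inr (α a))⁻¹}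

instance (U V : Type*) [Group U] [Group V] (A : Subgroup U) (α : A →* V) :
    Group (AmalgamatedProduct U V A α) :=
  inferInstanceAs (Group (Monoid.Coprod U V ⧸
    Subgroup.normalClosure
      {x : Monoid.Coprod U V |
        ∃ a : A, x = Monoid.Coprod.inl (a : U) * (Monoid.Coprod.inr (α a))⁻¹}))

/-- The canonical map `U → U *_A V`. -/
def AmalgamatedProduct.inl {U V : Type*} [Group U] [Group V] (A : Subgroup U) (α : A →* V) :
    U →* AmalgamatedProduct U V A α :=
  (QuotientGroup.mk' _).comp Monoid.Coprod.inl

/-- The canonical map `V → U *_A V`. -/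
def AmalgamatedProduct.inr {U V : Type*} [Group U] [Group V] (A : Subgroup U) (α : A →* V) :
    V →* AmalgamatedProduct U V A α :=
  (QuotientGroup.mk' _).comp Monoid.Coprod.inr

namespace ChiswellAux

variable (k : Type*) [CommRing k] {W : Type*} [Group W]

/-- The `k`-linear map `kW → k[W/H]`. -/
noncomputable def piH (H : Subgroup W) : MonoidAlgebra k W →ₗ[k] ((W ⧸ H) →₀ k) :=
  Finsupp.lmapDomain k k (QuotientGroup.mk : W → W ⧸ H) ∘ₗ
    (MonoidAlgebra.coeffLinearEquiv k : MonoidAlgebra k W ≃ₗ[k] (W →₀ k)).toLinearMap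

/-- `mapDomain` as a linear endomorphism of the monoid algebra. -/
noncomputable def mdom (f : W → W) : MonoidAlgebra k W →ₗ[k] MonoidAlgebra k W :=
  (MonoidAlgebra.coeffLinearEquiv k : MonoidAlgebra k W ≃ₗ[k] (W →₀ k)).symm.toLinearMap ∘ₗ
    Finsupp.lmapDomain k k f ∘ₗ
    (MonoidAlgebra.coeffLinearEquiv k : MonoidAlgebra k W ≃ₗ[k] (W →₀ k)).toLinearMap

variable {k}

theorem piH_apply (H : Subgroup W) (x : MonoidAlgebra k W) :
    piH k H x = Finsupp.mapDomain (QuotientGroup.mk : W → W ⧸ H) x.coeff := rfl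

theorem mdom_apply (f : W → W) (x : MonoidAlgebra k W) :
    mdom k f x = MonoidAlgebra.ofCoeff (Finsupp.mapDomain f x.coeff) := rfl

theorem piH_single (H : Subgroup W) (w : W) (c : k) :
    piH k H (MonoidAlgebra.single w c) = Finsupp.single (w : W ⧸ H) c := by
  rw [piH_apply, MonoidAlgebra.coeff_single, Finsupp.mapDomain_single]

theorem mdom_single (f : W → W) (g : W) (d : k) :
    mdom k f (MonoidAlgebra.single g d) = MonoidAlgebra.single (f g) d := by
  rw [mdom_apply, MonoidAlgebra.coeff_single, Finsupp.mapDomain_single]; rfl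

theorem single_mul_eq_smul_mdom (w : W) (b : k) (x : MonoidAlgebra k W) :
    MonoidAlgebra.single w b * x = b • mdom k (fun g => w * g) x := by
  induction x using MonoidAlgebra.induction_on with
  | of g =>
    show MonoidAlgebra.single w b * MonoidAlgebra.single g 1 = _
    rw [MonoidAlgebra.single_mul_single, mul_one]
    rw [show MonoidAlgebra.of k W g = MonoidAlgebra.single g (1 : k) from rfl, mdom_single]
    rw [MonoidAlgebra.smul_single', mul_one]
  | add f g hf hg => rw [mul_add, map_add, smul_add, hf, hg]
  | smul r f hf =>
    rw [mul_smul_comm, hf, map_smul, smul_comm]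

theorem piH_mdom (H : Subgroup W) (w : W) (x : MonoidAlgebra k W) :
    piH k H (mdom k (fun g => w * g) x)
      = Finsupp.mapDomain (fun q : W ⧸ H => w • q) (piH k H x) := by
  rw [piH_apply, mdom_apply, piH_apply, MonoidAlgebra.coeff_ofCoeff, ← Finsupp.mapDomain_comp,
    ← Finsupp.mapDomain_comp]
  rfl

theorem piH_mul_zero {H : Subgroup W} (c : MonoidAlgebra k W) {x : MonoidAlgebra k W}
    (hx : piH k H x = 0) : piH k H (c * x) = 0 := by
  induction c using MonoidAlgebra.induction_on with
  | of w =>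
    rw [show MonoidAlgebra.of k W w = MonoidAlgebra.single w (1 : k) from rfl,
      single_mul_eq_smul_mdom w 1 x, map_smul, piH_mdom, hx, Finsupp.mapDomain_zero, smul_zero]
  | add f g hf hg => rw [add_mul, map_add, hf, hg, add_zero]
  | smul r f hf => rw [smul_mul_assoc, map_smul, hf, smul_zero]

theorem relAugIdeal_le_ker_piH {H : Subgroup W} {x : MonoidAlgebra k W}
    (hx : x ∈ relAugIdeal k H) : piH k H x = 0 := by
  refine Submodule.span_induction ?_ ?_ ?_ ?_ hx
  · rintro y ⟨h, hh, rfl⟩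
    have h1 : ((h : W) : W ⧸ H) = ((1 : W) : W ⧸ H) := by
      rw [QuotientGroup.eq]
      simpa using hh
    show piH k H (MonoidAlgebra.single h 1 - MonoidAlgebra.single 1 1) = 0
    rw [map_sub, piH_single, piH_single, h1, sub_self]
  · simp
  · intro a b _ _ ha hb; rw [map_add, ha, hb, add_zero]
  · intro c a _ ha
    show piH k H (c * a) = 0
    exact piH_mul_zero c ha

theorem sub_mdom_out_mem (H : Subgroup W) (x : MonoidAlgebra k W) :
    x - mdom k (fun g : W => (QuotientGroup.mk (s := H) g).out) x ∈ relAugIdeal k H := by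
  induction x using MonoidAlgebra.induction_on with
  | of g =>
    rw [show MonoidAlgebra.of k W g = MonoidAlgebra.single g (1 : k) from rfl, mdom_single]
    obtain ⟨h, hh⟩ := QuotientGroup.mk_out_eq_mul H g
    rw [hh]
    have : MonoidAlgebra.single g (1 : k) - MonoidAlgebra.single (g * (h : W)) (1 : k)
        = -(MonoidAlgebra.single g (1 : k) * (MonoidAlgebra.of k W (h : W) - 1)) := by
      rw [mul_sub, mul_one]
      show _ = -(MonoidAlgebra.single g (1 : k) * MonoidAlgebra.single (h : W) 1 - _)
      rw [MonoidAlgebra.single_mul_single, mul_one]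
      abel
    rw [this]
    exact neg_mem (Ideal.mul_mem_left _ _ (Ideal.subset_span ⟨h, h.2, rfl⟩))
  | add f g hf hg =>
    have h2 := add_mem hf hg
    rw [map_add]
    convert h2 using 1
    abel
  | smul r f hf =>
    rw [map_smul, ← smul_sub]
    exact Submodule.smul_of_tower_mem _ r hf

theorem ker_piH_le_relAugIdeal {H : Subgroup W} {x : MonoidAlgebra k W}
    (hx : piH k H x = 0) : x ∈ relAugIdeal k H := by
  have h2 : mdom k (fun g : W => (QuotientGroup.mk (s := H) g).out) x
      = MonoidAlgebra.ofCoeff (Finsupp.mapDomain (fun q : W ⧸ H => q.out) (piH k H x)) := by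
    rw [mdom_apply, piH_apply, ← Finsupp.mapDomain_comp]
    rfl
  have := sub_mdom_out_mem H x
  rwa [h2, hx, Finsupp.mapDomain_zero, MonoidAlgebra.ofCoeff_zero, sub_zero] at this

end ChiswellAux

namespace ChiswellAux

variable {k : Type*} [CommRing k] {W : Type*} [Group W]

/-- The projection `W/R → W/P` when `R ≤ P`, via `Quotient.out`. -/
noncomputable def prj (R P : Subgroup W) : W ⧸ R → W ⧸ P :=
  fun q => QuotientGroup.mk q.out

theorem prj_mk {R P : Subgroup W} (hRP : R ≤ P) (g : W) :
    prj R P (QuotientGroup.mk g) = QuotientGroup.mk g := by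
  rw [prj, QuotientGroup.eq]
  obtain ⟨r, hr⟩ := QuotientGroup.mk_out_eq_mul R g
  rw [hr]
  simpa using hRP r.2

theorem piH_eq_mapDomain_piH {R P : Subgroup W} (hRP : R ≤ P) (x : MonoidAlgebra k W) :
    piH k P x = Finsupp.mapDomain (prj R P) (piH k R x) := by
  rw [piH_apply, piH_apply, ← Finsupp.mapDomain_comp]
  congr 1
  funext g
  exact (prj_mk hRP g).symm

theorem mapDomain_apply_eq_of_uniq {β : Type*} {R : Subgroup W} (y : (W ⧸ R) →₀ k)
    (f : W ⧸ R → β) (q₀ : W ⧸ R) (hq₀ : q₀ ∈ y.support)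
    (huniq : ∀ q ∈ y.support, f q = f q₀ → q = q₀) :
    (Finsupp.mapDomain f y) (f q₀) = y q₀ := by
  classical
  rw [Finsupp.mapDomain]
  rw [Finsupp.sum_apply]
  rw [Finsupp.sum]
  rw [Finset.sum_eq_single q₀]
  · simp
  · intro b hb hbne
    rw [Finsupp.single_apply, if_neg]
    intro hfb
    exact hbne (huniq b hb hfb)
  · intro h; exact absurd hq₀ h

theorem ker_piP_inter_piQ {P Q R : Subgroup W} (hRP : R ≤ P) (hRQ : R ≤ Q)
    (m : W → ℕ) (s : W → Bool)
    (F1a : ∀ w w', s w = true → s w' = true → w⁻¹ * w' ∈ P → w⁻¹ * w' ∈ R)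
    (F1b : ∀ w w', s w = false → s w' = false → w⁻¹ * w' ∈ Q → w⁻¹ * w' ∈ R)
    (F2a : ∀ w w', s w = true → s w' = false → w⁻¹ * w' ∈ P → m w < m w')
    (F2b : ∀ w w', s w = false → s w' = true → w⁻¹ * w' ∈ Q → m w < m w')
    (x : MonoidAlgebra k W) (hP : piH k P x = 0) (hQ : piH k Q x = 0) :
    piH k R x = 0 := by
  by_contra hne
  set y := piH k R x with hy
  have hsupp : y.support.Nonempty := Finsupp.support_nonempty_iff.2 hne
  obtain ⟨q₀, hq₀mem, hq₀max⟩ := y.support.exists_max_image (fun q => m q.out) hsupp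
  have key : ∀ (T : Subgroup W), R ≤ T → piH k T x = 0 →
      (∀ q ∈ y.support, (q.out)⁻¹ * (q₀.out)⁻¹⁻¹ ∈ T → q = q₀) → False := by
    intro T hRT h0 huniq
    have h1 : (Finsupp.mapDomain (prj R T) y) (prj R T q₀) = y q₀ := by
      apply mapDomain_apply_eq_of_uniq y (prj R T) q₀ hq₀mem
      intro q hq hfq
      apply huniq q hq
      rw [inv_inv]
      rw [prj, prj, QuotientGroup.eq] at hfq
      exact hfq
    rw [← piH_eq_mapDomain_piH hRT, h0] at h1
    simp only [Finsupp.coe_zero, Pi.zero_apply] at h1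
    exact (Finsupp.mem_support_iff.1 hq₀mem) h1.symm
  cases hsb : s q₀.out with
  | true =>
    refine key P hRP hP ?_
    intro q hq hmem
    rw [inv_inv] at hmem
    cases hsb' : s q.out with
    | true =>
      have := F1a q₀.out q.out hsb hsb' ?_
      · have : (QuotientGroup.mk q₀.out : W ⧸ R) = QuotientGroup.mk q.out := by
          rw [QuotientGroup.eq]; exact this
        rw [QuotientGroup.out_eq', QuotientGroup.out_eq'] at this
        exact this.symm
      · have := (inv_mem_iff (x := (q.out)⁻¹ * q₀.out)).2 hmem
        simpa [mul_inv_rev] using this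
    | false =>
      exfalso
      have hlt := F2a q₀.out q.out hsb hsb' ?_
      · exact absurd (hq₀max q hq) (by omega)
      · have := (inv_mem_iff (x := (q.out)⁻¹ * q₀.out)).2 hmem
        simpa [mul_inv_rev] using this
  | false =>
    refine key Q hRQ hQ ?_
    intro q hq hmem
    rw [inv_inv] at hmem
    cases hsb' : s q.out with
    | false =>
      have := F1b q₀.out q.out hsb hsb' ?_
      · have : (QuotientGroup.mk q₀.out : W ⧸ R) = QuotientGroup.mk q.out := by
          rw [QuotientGroup.eq]; exact this
        rw [QuotientGroup.out_eq', QuotientGroup.out_eq'] at this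
        exact this.symm
      · have := (inv_mem_iff (x := (q.out)⁻¹ * q₀.out)).2 hmem
        simpa [mul_inv_rev] using this
    | true =>
      exfalso
      have hlt := F2b q₀.out q.out hsb hsb' ?_
      · exact absurd (hq₀max q hq) (by omega)
      · have := (inv_mem_iff (x := (q.out)⁻¹ * q₀.out)).2 hmem
        simpa [mul_inv_rev] using this

end ChiswellAux

namespace ChiswellAux

variable {k : Type*} [CommRing k] {W : Type*} [Group W]

theorem augHom_of (g : W) : augHom k W (MonoidAlgebra.of k W g) = 1 := by
  simp [augHom]

theorem relAugIdeal_le_augIdeal (H : Subgroup W) : relAugIdeal k H ≤ augIdeal k W := by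
  rw [relAugIdeal, Ideal.span_le]
  rintro x ⟨h, _, rfl⟩
  show (augHom k W).toRingHom _ = 0
  show augHom k W _ = 0
  rw [map_sub, augHom_of, map_one, sub_self]

theorem relAugIdeal_mono {H₁ H₂ : Subgroup W} (h : H₁ ≤ H₂) :
    relAugIdeal k H₁ ≤ relAugIdeal k H₂ := by
  apply Ideal.span_mono
  exact Set.image_mono h

theorem sub_aug_smul_one_mem (J : Ideal (MonoidAlgebra k W))
    (hJ : ∀ g : W, MonoidAlgebra.of k W g - 1 ∈ J) (x : MonoidAlgebra k W) :
    x - augHom k W x • 1 ∈ J := by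
  induction x using MonoidAlgebra.induction_on with
  | of g =>
    rw [augHom_of, one_smul]
    exact hJ g
  | add f g hf hg =>
    have := add_mem hf hg
    rw [map_add]
    convert this using 1
    rw [add_smul]
    abel
  | smul r f hf =>
    rw [map_smul, smul_eq_mul, mul_smul, ← smul_sub]
    exact Submodule.smul_of_tower_mem _ r hf

/-- The subgroup of elements `w` with `w - 1` in a given ideal. -/
def subOneSubgroup (J : Ideal (MonoidAlgebra k W)) : Subgroup W where
  carrier := { w : W | MonoidAlgebra.of k W w - 1 ∈ J }
  one_mem' := by
    show MonoidAlgebra.of k W 1 - 1 ∈ J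
    rw [map_one, sub_self]
    exact zero_mem J
  mul_mem' := by
    intro x y hx hy
    have : MonoidAlgebra.of k W (x * y) - 1
        = MonoidAlgebra.of k W x * (MonoidAlgebra.of k W y - 1)
          + (MonoidAlgebra.of k W x - 1) := by
      rw [map_mul, mul_sub, mul_one]; abel
    simp only [Set.mem_setOf_eq] at *
    rw [this]
    exact add_mem (Ideal.mul_mem_left _ _ hy) hx
  inv_mem' := by
    intro x hx
    simp only [Set.mem_setOf_eq] at *
    have : MonoidAlgebra.of k W x⁻¹ - 1
        = -(MonoidAlgebra.of k W x⁻¹ * (MonoidAlgebra.of k W x - 1)) := by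
      rw [mul_sub, mul_one, ← map_mul, inv_mul_cancel, map_one, neg_sub]
    rw [this]
    exact neg_mem (Ideal.mul_mem_left _ _ hx)

theorem chiswell_main (P Q R : Subgroup W) (hRP : R ≤ P) (hRQ : R ≤ Q)
    (hPQ : P ⊔ Q = ⊤)
    (m : W → ℕ) (s : W → Bool)
    (F1a : ∀ w w', s w = true → s w' = true → w⁻¹ * w' ∈ P → w⁻¹ * w' ∈ R)
    (F1b : ∀ w w', s w = false → s w' = false → w⁻¹ * w' ∈ Q → w⁻¹ * w' ∈ R)
    (F2a : ∀ w w', s w = true → s w' = false → w⁻¹ * w' ∈ P → m w < m w')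
    (F2b : ∀ w w', s w = false → s w' = true → w⁻¹ * w' ∈ Q → m w < m w') :
    (∀ a ∈ relAugIdeal k R, a ∈ relAugIdeal k P ∧ a ∈ relAugIdeal k Q) ∧
    Function.Injective (fun a : relAugIdeal k R =>
      ((a : MonoidAlgebra k W), -(a : MonoidAlgebra k W))) ∧
    (∀ b ∈ relAugIdeal k P, ∀ c ∈ relAugIdeal k Q, b + c ∈ augIdeal k W) ∧
    (∀ b ∈ relAugIdeal k P, ∀ c ∈ relAugIdeal k Q,
      (b + c = 0 ↔ ∃ a ∈ relAugIdeal k R, b = a ∧ c = -a)) ∧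
    (∀ x ∈ augIdeal k W, ∃ b ∈ relAugIdeal k P, ∃ c ∈ relAugIdeal k Q, x = b + c) := by
  refine ⟨?_, ?_, ?_, ?_, ?_⟩
  · intro a ha
    exact ⟨relAugIdeal_mono hRP ha, relAugIdeal_mono hRQ ha⟩
  · intro a b h
    exact Subtype.ext (congr_arg Prod.fst h)
  · intro b hb c hc
    exact add_mem (relAugIdeal_le_augIdeal P hb) (relAugIdeal_le_augIdeal Q hc)
  · intro b hb c hc
    constructor
    · intro hbc
      have hcb : c = -b := eq_neg_of_add_eq_zero_right hbc
      have hbP : piH k P b = 0 := relAugIdeal_le_ker_piH hb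
      have hbQ : piH k Q b = 0 := by
        have : piH k Q c = 0 := relAugIdeal_le_ker_piH hc
        rw [hcb, map_neg, neg_eq_zero] at this
        exact this
      have hbR : piH k R b = 0 :=
        ker_piP_inter_piQ hRP hRQ m s F1a F1b F2a F2b b hbP hbQ
      exact ⟨b, ker_piH_le_relAugIdeal hbR, rfl, hcb⟩
    · rintro ⟨a, _, rfl, rfl⟩
      exact add_neg_cancel _
  · intro x hx
    have haug : augHom k W x = 0 := hx
    have hsub : ∀ g : W, MonoidAlgebra.of k W g - 1
        ∈ relAugIdeal k P ⊔ relAugIdeal k Q := by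
      intro g
      have hPle : P ≤ subOneSubgroup (relAugIdeal k P ⊔ relAugIdeal k Q) := by
        intro p hp
        exact le_sup_left (α := Ideal (MonoidAlgebra k W))
          (Ideal.subset_span ⟨p, hp, rfl⟩)
      have hQle : Q ≤ subOneSubgroup (relAugIdeal k P ⊔ relAugIdeal k Q) := by
        intro q hq
        exact le_sup_right (α := Ideal (MonoidAlgebra k W))
          (Ideal.subset_span ⟨q, hq, rfl⟩)
      have : (⊤ : Subgroup W) ≤ subOneSubgroup (relAugIdeal k P ⊔ relAugIdeal k Q) := by
        rw [← hPQ]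
        exact sup_le hPle hQle
      exact this (Subgroup.mem_top g)
    have hx2 : x ∈ relAugIdeal k P ⊔ relAugIdeal k Q := by
      have := sub_aug_smul_one_mem (relAugIdeal k P ⊔ relAugIdeal k Q) hsub x
      rwa [haug, zero_smul, sub_zero] at this
    obtain ⟨b, hb, c, hc, hbc⟩ := Submodule.mem_sup.1 hx2
    exact ⟨b, hb, c, hc, hbc.symm⟩

end ChiswellAux

namespace ChiswellAux

open Monoid Monoid.PushoutI Monoid.PushoutI.NormalWord

section Pushout

variable {B : Type*} [Group B] {G : Bool → Type*} [∀ b, Group (G b)]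
  {φ : ∀ b, B →* G b} (d : Transversal φ)

/-- The normal word of an element of the pushout. -/
noncomputable def nw (v : PushoutI φ) : NormalWord d :=
  letI := Classical.decEq Bool
  letI : ∀ b, DecidableEq (G b) := fun _ => Classical.decEq _
  NormalWord.equiv v

theorem nw_prod (v : PushoutI φ) : (nw d v).prod = v := by
  letI := Classical.decEq Bool
  letI : ∀ b, DecidableEq (G b) := fun _ => Classical.decEq _
  exact Equiv.symm_apply_apply NormalWord.equiv v

theorem nw_eq_of_prod (ω : NormalWord d) (v : PushoutI φ) (h : ω.prod = v) :
    nw d v = ω :=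
  prod_injective (by rw [nw_prod, h])

/-- The list of letters of the normal form of `v`. -/
noncomputable def letters (v : PushoutI φ) : List (Σ b, G b) :=
  (nw d v).toWord.toList

theorem letters_of_mul (i : Bool) (u : G i) (v : PushoutI φ)
    (hne : (nw d v).toWord.fstIdx ≠ some i) :
    (PushoutI.of i u ∈ (PushoutI.base φ).range ∧
      letters d (PushoutI.of i u * v) = letters d v) ∨
    (∃ t : G i, letters d (PushoutI.of i u * v) = ⟨i, t⟩ :: letters d v) := by
  set ω := nw d v with hω
  have hv : ω.prod = v := nw_prod d v
  set h := ω.head with hh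
  set g := u * φ i h with hg
  have hdec : (((d.compl i).equiv g).1 : G i) * (((d.compl i).equiv g).2 : G i) = g :=
    Subgroup.IsComplement.equiv_fst_mul_equiv_snd _ g
  obtain ⟨h', hh'⟩ := (((d.compl i).equiv g).1).2
  set t := (((d.compl i).equiv g).2 : G i) with htdef
  have ht : t ∈ d.set i := (((d.compl i).equiv g).2).2
  have heq : φ i h' * t = g := by rw [hh']; exact hdec
  have hCv : v = PushoutI.base φ h * ofCoprodI ω.toWord.prod := by
    rw [← hv]; rfl
  have hofu : PushoutI.of i u * v = PushoutI.of i g *  ofCoprodI ω.toWord.prod := by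
    rw [hCv, ← mul_assoc, hg, ← of_apply_eq_base φ i h, ← map_mul]
  by_cases ht1 : t = 1
  · left
    have hgφ : g = φ i h' := by rw [← heq, ht1, mul_one]
    have hu : u = φ i (h' * h⁻¹) := by
      rw [map_mul, ← hgφ, hg, map_inv]
      group
    constructor
    · exact ⟨h' * h⁻¹, by rw [← of_apply_eq_base φ i, ← hu]⟩
    · have : nw d (PushoutI.of i u * v) = ⟨ω.toWord, h', ω.normalized⟩ := by
        apply nw_eq_of_prod
        show PushoutI.base φ h' * ofCoprodI ω.toWord.prod = _
        rw [hofu, hgφ, of_apply_eq_base φ i]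
      rw [letters, letters, this]
  · right
    refine ⟨t, ?_⟩
    have hnorm : ∀ j gj, (⟨j, gj⟩ : Σ b, G b) ∈ (CoprodI.Word.cons t ω.toWord hne ht1).toList
        → gj ∈ d.set j := by
      intro j gj hj
      rw [CoprodI.Word.cons] at hj
      rcases List.mem_cons.1 hj with h1 | h2
      · rcases Sigma.mk.inj_iff.1 h1 with ⟨rfl, h2⟩
        rw [eq_of_heq h2]
        exact ht
      · exact ω.normalized _ _ h2
    have : nw d (PushoutI.of i u * v)
        = ⟨CoprodI.Word.cons t ω.toWord hne ht1, h', hnorm⟩ := by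
      apply nw_eq_of_prod
      show PushoutI.base φ h' * ofCoprodI (CoprodI.Word.cons t ω.toWord hne ht1).prod = _
      rw [CoprodI.Word.prod_cons, map_mul, ofCoprodI_of, ← mul_assoc,
        ← of_apply_eq_base φ i, ← map_mul, heq, hofu]
    rw [letters, letters, this]
    rfl

end Pushout

end ChiswellAux

namespace ChiswellAux

open Monoid Monoid.PushoutI Monoid.PushoutI.NormalWord

section Pushout

variable {B : Type*} [Group B] {G : Bool → Type*} [∀ b, Group (G b)]
  {φ : ∀ b, B →* G b} (d : Transversal φ)

/-- The length measure on the pushout used for the forest argument. -/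
noncomputable def mlen (w : PushoutI φ) : ℕ := (letters d w⁻¹).length

/-- The side function on the pushout used for the forest argument. -/
noncomputable def side (w : PushoutI φ) : Bool :=
  decide ((nw d w⁻¹).toWord.fstIdx = some false)

theorem fstIdx_eq_letters (v : PushoutI φ) :
    (nw d v).toWord.fstIdx = ((letters d v).head?).map Sigma.fst := rfl

theorem inv_eq_of_inv_mul {i : Bool} {u₀ : G i} {w w' : PushoutI φ}
    (hww' : w⁻¹ * w' = PushoutI.of i u₀) : w'⁻¹ = PushoutI.of i u₀⁻¹ * w⁻¹ := by
  have : w' = w * PushoutI.of i u₀ := by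
    rw [← hww', mul_inv_cancel_left]
  rw [this, map_inv]
  group

theorem side_eq_side {i : Bool} {u₀ : G i} {w w' : PushoutI φ}
    (hww' : w⁻¹ * w' = PushoutI.of i u₀)
    (hne : (nw d w⁻¹).toWord.fstIdx ≠ some i) :
    (PushoutI.of i u₀ ∈ (PushoutI.base φ).range ∧ side d w' = side d w ∧
      mlen d w' = mlen d w) ∨
    ((nw d w'⁻¹).toWord.fstIdx = some i ∧ mlen d w' = mlen d w + 1) := by
  rcases letters_of_mul d i u₀⁻¹ w⁻¹ hne with ⟨hbase, hlet⟩ | ⟨t, hlet⟩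
  · left
    refine ⟨by simpa using inv_mem hbase, ?_, ?_⟩
    · rw [side, side, fstIdx_eq_letters, fstIdx_eq_letters, inv_eq_of_inv_mul hww', hlet]
    · rw [mlen, mlen, inv_eq_of_inv_mul hww', hlet]
  · right
    constructor
    · rw [fstIdx_eq_letters, inv_eq_of_inv_mul hww', hlet]
      rfl
    · rw [mlen, mlen, inv_eq_of_inv_mul hww', hlet]
      simp

theorem pushF1a (w w' : PushoutI φ) (hw : side d w = true) (hw' : side d w' = true)
    (hP : w⁻¹ * w' ∈ (PushoutI.of (φ := φ) true).range) :
    w⁻¹ * w' ∈ (PushoutI.base φ).range := by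
  obtain ⟨u₀, hu⟩ := hP
  rw [side, decide_eq_true_eq] at hw hw'
  rcases side_eq_side d hu.symm (by rw [hw]; simp) with ⟨hb, _, _⟩ | ⟨hidx, _⟩
  · rw [hu] at hb; exact hb
  · rw [hw'] at hidx; simp at hidx

theorem pushF1b (w w' : PushoutI φ) (hw : side d w = false) (hw' : side d w' = false)
    (hP : w⁻¹ * w' ∈ (PushoutI.of (φ := φ) false).range) :
    w⁻¹ * w' ∈ (PushoutI.base φ).range := by
  obtain ⟨u₀, hu⟩ := hP
  rw [side, decide_eq_false_iff_not] at hw hw'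
  rcases side_eq_side d hu.symm hw with ⟨hb, _, _⟩ | ⟨hidx, _⟩
  · rw [hu] at hb; exact hb
  · exact absurd hidx hw'

theorem pushF2a (w w' : PushoutI φ) (hw : side d w = true) (hw' : side d w' = false)
    (hP : w⁻¹ * w' ∈ (PushoutI.of (φ := φ) true).range) :
    mlen d w < mlen d w' := by
  obtain ⟨u₀, hu⟩ := hP
  have hwt := hw
  rw [side, decide_eq_true_eq] at hwt
  rcases side_eq_side d hu.symm (by rw [hwt]; simp) with ⟨_, hss, _⟩ | ⟨_, hm⟩
  · rw [hw', hw] at hss; simp at hss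
  · omega

theorem pushF2b (w w' : PushoutI φ) (hw : side d w = false) (hw' : side d w' = true)
    (hP : w⁻¹ * w' ∈ (PushoutI.of (φ := φ) false).range) :
    mlen d w < mlen d w' := by
  obtain ⟨u₀, hu⟩ := hP
  have hwt := hw
  rw [side, decide_eq_false_iff_not] at hwt
  rcases side_eq_side d hu.symm hwt with ⟨_, hss, _⟩ | ⟨_, hm⟩
  · rw [hw', hw] at hss; simp at hss
  · omega

end Pushout

end ChiswellAux

namespace ChiswellAux

open Monoid Monoid.PushoutI Monoid.PushoutI.NormalWord

section Amalgam

universe u v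

variable {U : Type u} {V : Type v} [Group U] [Group V] (A : Subgroup U) (α : A →* V)

/-- The two-element family of groups for the pushout presentation. -/
def GG (U : Type u) (V : Type v) : Bool → Type (max u v)
  | true => ULift.{v} U
  | false => ULift.{u} V

instance : ∀ b, Group (GG U V b)
  | true => inferInstanceAs (Group (ULift U))
  | false => inferInstanceAs (Group (ULift V))

/-- The two maps from `A` into the family. -/
def φfam : ∀ b, A →* GG U V b
  | true => (MulEquiv.ulift.symm : U ≃* ULift.{v} U).toMonoidHom.comp A.subtype
  | false => (MulEquiv.ulift.symm : V ≃* ULift.{u} V).toMonoidHom.comp α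

theorem φfam_injective (hα : Function.Injective α) :
    ∀ b, Function.Injective (φfam A α b)
  | true => (MulEquiv.ulift.symm : U ≃* ULift.{v} U).injective.comp A.subtype_injective
  | false => (MulEquiv.ulift.symm : V ≃* ULift.{u} V).injective.comp hα

/-- The normal closure we quotient by. -/
abbrev NN : Subgroup (Coprod U V) :=
  Subgroup.normalClosure
    {x : Monoid.Coprod U V |
      ∃ a : A, x = Monoid.Coprod.inl (a : U) * (Monoid.Coprod.inr (α a))⁻¹}

theorem inl_eq_inr (a : A) :
    AmalgamatedProduct.inl A α (a : U) = AmalgamatedProduct.inr A α (α a) := by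
  show QuotientGroup.mk _ = QuotientGroup.mk _
  rw [QuotientGroup.eq]
  have hgen : Coprod.inl (a : U) * (Coprod.inr (α a) : Coprod U V)⁻¹ ∈ NN A α :=
    Subgroup.subset_normalClosure ⟨a, rfl⟩
  have hinv := inv_mem hgen
  have hconj := Subgroup.Normal.conj_mem (inferInstance : (NN A α).Normal) _ hinv
    (Coprod.inl (a : U))⁻¹
  convert hconj using 1
  simp [mul_inv_rev, mul_assoc]

/-- The map from the free product to the pushout. -/
noncomputable def coprodHom : Coprod U V →* PushoutI (φfam A α) :=
  Coprod.lift
    ((PushoutI.of (φ := φfam A α) true).comp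
      (MulEquiv.ulift.symm : U ≃* ULift.{v} U).toMonoidHom)
    ((PushoutI.of (φ := φfam A α) false).comp
      (MulEquiv.ulift.symm : V ≃* ULift.{u} V).toMonoidHom)

theorem coprodHom_inl (x : U) : coprodHom A α (Coprod.inl x)
    = PushoutI.of (φ := φfam A α) true ((MulEquiv.ulift.symm : U ≃* ULift.{v} U) x) := by
  rw [coprodHom, Coprod.lift_apply_inl]; rfl

theorem coprodHom_inr (x : V) : coprodHom A α (Coprod.inr x)
    = PushoutI.of (φ := φfam A α) false ((MulEquiv.ulift.symm : V ≃* ULift.{u} V) x) := by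
  rw [coprodHom, Coprod.lift_apply_inr]; rfl

theorem coprodHom_ker : NN A α ≤ (coprodHom A α).ker := by
  apply Subgroup.normalClosure_le_normal
  rintro y ⟨a, rfl⟩
  rw [SetLike.mem_coe, MonoidHom.mem_ker, map_mul, map_inv, coprodHom_inl, coprodHom_inr]
  have h1 : (PushoutI.of (φ := φfam A α) true)
      ((MulEquiv.ulift.symm : U ≃* ULift.{v} U) (a : U))
      = PushoutI.base (φfam A α) a := of_apply_eq_base (φfam A α) true a
  have h2 : (PushoutI.of (φ := φfam A α) false)
      ((MulEquiv.ulift.symm : V ≃* ULift.{u} V) (α a))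
      = PushoutI.base (φfam A α) a := of_apply_eq_base (φfam A α) false a
  rw [h1, h2, mul_inv_cancel]

/-- The map to the pushout. -/
noncomputable def toPush : AmalgamatedProduct U V A α →* PushoutI (φfam A α) :=
  QuotientGroup.lift (NN A α) (coprodHom A α) (coprodHom_ker A α)

theorem toPush_mk (x : Coprod U V) :
    toPush A α (QuotientGroup.mk x) = coprodHom A α x := rfl

/-- The map from the pushout. -/
noncomputable def fromPush : PushoutI (φfam A α) →* AmalgamatedProduct U V A α :=
  PushoutI.lift
    (fun b => match b with
      | true => (AmalgamatedProduct.inl A α).comp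
          (MulEquiv.ulift : ULift.{v} U ≃* U).toMonoidHom
      | false => (AmalgamatedProduct.inr A α).comp
          (MulEquiv.ulift : ULift.{u} V ≃* V).toMonoidHom)
    ((AmalgamatedProduct.inl A α).comp A.subtype)
    (by
      intro b
      cases b with
      | true => ext a; rfl
      | false =>
        ext a
        show AmalgamatedProduct.inr A α
          ((MulEquiv.ulift : ULift.{u} V ≃* V) ((MulEquiv.ulift.symm : V ≃* ULift.{u} V) (α a)))
          = AmalgamatedProduct.inl A α (a : U)
        rw [MulEquiv.apply_symm_apply]
        exact (inl_eq_inr A α a).symm)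

theorem fromPush_of_true (x : ULift.{v} U) :
    fromPush A α (PushoutI.of (φ := φfam A α) true x)
      = AmalgamatedProduct.inl A α ((MulEquiv.ulift : ULift.{v} U ≃* U) x) := by
  rw [fromPush]
  exact PushoutI.lift_of ..

theorem fromPush_of_false (x : ULift.{u} V) :
    fromPush A α (PushoutI.of (φ := φfam A α) false x)
      = AmalgamatedProduct.inr A α ((MulEquiv.ulift : ULift.{u} V ≃* V) x) := by
  rw [fromPush]
  exact PushoutI.lift_of ..

theorem toPush_comp_inl :
    (toPush A α).comp (AmalgamatedProduct.inl A α)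
      = (PushoutI.of (φ := φfam A α) true).comp
        (MulEquiv.ulift.symm : U ≃* ULift.{v} U).toMonoidHom := by
  ext u
  show toPush A α (QuotientGroup.mk (Coprod.inl u)) = _
  rw [toPush_mk, coprodHom_inl]
  rfl

theorem toPush_comp_inr :
    (toPush A α).comp (AmalgamatedProduct.inr A α)
      = (PushoutI.of (φ := φfam A α) false).comp
        (MulEquiv.ulift.symm : V ≃* ULift.{u} V).toMonoidHom := by
  ext u
  show toPush A α (QuotientGroup.mk (Coprod.inr u)) = _
  rw [toPush_mk, coprodHom_inr]
  rfl

theorem fromPush_comp_toPush :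
    (fromPush A α).comp (toPush A α) = MonoidHom.id _ := by
  apply QuotientGroup.monoidHom_ext
  apply Coprod.hom_ext
  · ext u
    show fromPush A α (toPush A α (QuotientGroup.mk (Coprod.inl u))) = _
    rw [toPush_mk, coprodHom_inl, fromPush_of_true, MulEquiv.apply_symm_apply]
    rfl
  · ext u
    show fromPush A α (toPush A α (QuotientGroup.mk (Coprod.inr u))) = _
    rw [toPush_mk, coprodHom_inr, fromPush_of_false, MulEquiv.apply_symm_apply]
    rfl

theorem toPush_comp_fromPush :
    (toPush A α).comp (fromPush A α) = MonoidHom.id _ := by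
  apply PushoutI.hom_ext_nonempty
  intro b
  cases b with
  | true =>
    ext x
    show toPush A α (fromPush A α (PushoutI.of true x)) = _
    rw [fromPush_of_true A α x]
    have : toPush A α (AmalgamatedProduct.inl A α ((MulEquiv.ulift : ULift.{v} U ≃* U) x))
        = (PushoutI.of (φ := φfam A α) true)
          ((MulEquiv.ulift.symm : U ≃* ULift.{v} U)
            ((MulEquiv.ulift : ULift.{v} U ≃* U) x)) :=
      DFunLike.congr_fun (toPush_comp_inl A α) _
    rw [this]
    rfl
  | false =>
    ext x
    show toPush A α (fromPush A α (PushoutI.of false x)) = _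
    rw [fromPush_of_false A α x]
    have : toPush A α (AmalgamatedProduct.inr A α ((MulEquiv.ulift : ULift.{u} V ≃* V) x))
        = (PushoutI.of (φ := φfam A α) false)
          ((MulEquiv.ulift.symm : V ≃* ULift.{u} V)
            ((MulEquiv.ulift : ULift.{u} V ≃* V) x)) :=
      DFunLike.congr_fun (toPush_comp_inr A α) _
    rw [this]
    rfl

theorem toPush_injective : Function.Injective (toPush A α) := by
  intro x y h
  have := DFunLike.congr_fun (fromPush_comp_toPush A α)
  calc x = fromPush A α (toPush A α x) := (this x).symm
    _ = fromPush A α (toPush A α y) := by rw [h]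
    _ = y := this y

theorem map_range_inl :
    ((AmalgamatedProduct.inl A α).range).map (toPush A α)
      = (PushoutI.of (φ := φfam A α) true).range := by
  rw [← MonoidHom.range_comp, toPush_comp_inl]
  ext y
  constructor
  · rintro ⟨u, rfl⟩; exact ⟨_, rfl⟩
  · rintro ⟨u, rfl⟩
    exact ⟨(MulEquiv.ulift : ULift.{v} U ≃* U) u, rfl⟩

theorem map_range_inr :
    ((AmalgamatedProduct.inr A α).range).map (toPush A α)
      = (PushoutI.of (φ := φfam A α) false).range := by
  rw [← MonoidHom.range_comp, toPush_comp_inr]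
  ext y
  constructor
  · rintro ⟨u, rfl⟩; exact ⟨_, rfl⟩
  · rintro ⟨u, rfl⟩
    exact ⟨(MulEquiv.ulift : ULift.{u} V ≃* V) u, rfl⟩

theorem map_range_base :
    (A.map (AmalgamatedProduct.inl A α)).map (toPush A α)
      = (PushoutI.base (φfam A α)).range := by
  rw [Subgroup.map_map, ← of_comp_eq_base (φ := φfam A α) true]
  have h1 : (PushoutI.of (φ := φfam A α) true).comp (φfam A α true)
      = ((toPush A α).comp (AmalgamatedProduct.inl A α)).comp A.subtype := by
    rw [toPush_comp_inl]
    rfl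
  rw [h1, MonoidHom.range_comp, Subgroup.range_subtype]

end Amalgam

end ChiswellAux

open ChiswellAux Monoid Monoid.PushoutI Monoid.PushoutI.NormalWord

/-- **Chiswell's Mayer–Vietoris sequence for an amalgamated product.** Let `k` be a commutative
ring, `A ≤ U` a subgroup, `α : A → V` injective, and `W = U *_A V`. Then
`0 → kI_A^W → kI_U^W ⊕ kI_V^W → kI_W → 0` is exact, where the first map is `a ↦ (a, -a)` and
the second is `(b, c) ↦ b + c`. -/
theorem amalgam_augmentation_exact_sequence (k : Type*) [CommRing k]
    (U V : Type*) [Group U] [Group V] (A : Subgroup U) (α : A →* V)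
    (hα : Function.Injective α) :
    let W := AmalgamatedProduct U V A α
    let IA := relAugIdeal k (A.map (AmalgamatedProduct.inl A α))
    let IU := relAugIdeal k (AmalgamatedProduct.inl A α).range
    let IV := relAugIdeal k (AmalgamatedProduct.inr A α).range
    let IW := augIdeal k W
    -- `γ` is well defined: `kI_A^W ⊆ kI_U^W` and `kI_A^W ⊆ kI_V^W`
    (∀ a ∈ IA, a ∈ IU ∧ a ∈ IV) ∧
    -- `γ` is injective
    Function.Injective (fun a : IA => ((a : MonoidAlgebra k W), -(a : MonoidAlgebra k W))) ∧
    -- `p` maps `kI_U^W ⊕ kI_V^W` into `kI_W`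
    (∀ b ∈ IU, ∀ c ∈ IV, b + c ∈ IW) ∧
    -- exactness in the middle: the kernel of `p` is the image of `γ`
    (∀ b ∈ IU, ∀ c ∈ IV, (b + c = 0 ↔ ∃ a ∈ IA, b = a ∧ c = -a)) ∧
    -- `p` maps onto `kI_W`
    (∀ x ∈ IW, ∃ b ∈ IU, ∃ c ∈ IV, x = b + c) := by
  intro W IA IU IV IW
  obtain ⟨d⟩ := transversal_nonempty (φfam A α) (φfam_injective A α hα)
  have transfer : ∀ (S : Subgroup W) (S' : Subgroup (PushoutI (φfam A α))),
      S.map (toPush A α) = S' → ∀ x : W, (x ∈ S ↔ toPush A α x ∈ S') := by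
    intro S S' hmap x
    constructor
    · intro hx; rw [← hmap]; exact Subgroup.mem_map_of_mem _ hx
    · intro hx
      rw [← hmap] at hx
      obtain ⟨r, hr, hre⟩ := hx
      rwa [← toPush_injective A α hre]
  have emem : ∀ w w' : W, toPush A α (w⁻¹ * w')
      = (toPush A α w)⁻¹ * toPush A α w' := by
    intro w w'; rw [map_mul, map_inv]
  refine chiswell_main (k := k)
    (AmalgamatedProduct.inl A α).range (AmalgamatedProduct.inr A α).range
    (A.map (AmalgamatedProduct.inl A α)) ?_ ?_ ?_
    (fun w => mlen d (toPush A α w)) (fun w => side d (toPush A α w)) ?_ ?_ ?_ ?_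
  · rintro _ ⟨a, _, rfl⟩
    exact ⟨a, rfl⟩
  · rintro _ ⟨a, ha, rfl⟩
    exact ⟨α ⟨a, ha⟩, (inl_eq_inr A α ⟨a, ha⟩).symm⟩
  · rw [eq_top_iff]
    intro w _
    obtain ⟨x, rfl⟩ := QuotientGroup.mk'_surjective (NN A α) w
    induction x using Coprod.induction_on with
    | inl u => exact Subgroup.mem_sup_left ⟨u, rfl⟩
    | inr v => exact Subgroup.mem_sup_right ⟨v, rfl⟩
    | mul x y hx hy =>
      rw [map_mul]
      exact mul_mem (hx trivial) (hy trivial)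
  · intro w w' hw hw' hP
    refine (transfer _ _ (map_range_base A α) _).2 ?_
    rw [emem]
    refine pushF1a d _ _ hw hw' ?_
    rw [← emem]
    exact (transfer _ _ (map_range_inl A α) _).1 hP
  · intro w w' hw hw' hQ
    refine (transfer _ _ (map_range_base A α) _).2 ?_
    rw [emem]
    refine pushF1b d _ _ hw hw' ?_
    rw [← emem]
    exact (transfer _ _ (map_range_inr A α) _).1 hQ
  · intro w w' hw hw' hP
    refine pushF2a d _ _ hw hw' ?_
    rw [← emem]
    exact (transfer _ _ (map_range_inl A α) _).1 hP
  · intro w w' hw hw' hQ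
    refine pushF2b d _ _ hw hw' ?_
    rw [← emem]
    exact (transfer _ _ (map_range_inr A α) _).1 hQ
end

section
/- Let k be a commutative ring and let φ : G̃ → G be a surjective group homomorphism with kernel K. Suppose that the natural homomorphism of left kG-modules α : kG ⊗_{kG̃} kI_{G̃} → kI_G, defined by the k-linear extension of a ⊗ b ↦ a·φ(b), is an isomorphism. Then k ⊗_ℤ K_ab = 0, where K_ab is the abelianization of K. -/
open scoped TensorProduct

set_option maxHeartbeats 1000000
set_option synthInstance.maxHeartbeats 200000

section

variable (k : Type*) [CommRing k] {Gt G : Type*} [Group Gt] [Group G] (φ : Gt →* G)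

noncomputable def phiHat : MonoidAlgebra k Gt →ₐ[k] MonoidAlgebra k G :=
  MonoidAlgebra.mapDomainAlgHom k k φ

noncomputable def betaMap :
    (MonoidAlgebra k G) ⊗[k] (augIdeal k Gt) →ₗ[k] MonoidAlgebra k G :=
  TensorProduct.lift <| LinearMap.mk₂ k
    (fun a b => a * phiHat k φ (b : MonoidAlgebra k Gt))
    (fun a a' b => by simp only [add_mul])
    (fun c a b => by simp only [smul_mul_assoc])
    (fun a b b' => by simp only [Submodule.coe_add, map_add, mul_add])
    (fun c a b => by simp only [Submodule.coe_smul_of_tower, map_smul, mul_smul_comm])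

noncomputable def balancingRel :
    Submodule k ((MonoidAlgebra k G) ⊗[k] (augIdeal k Gt)) :=
  Submodule.span k
    {z | ∃ (a : MonoidAlgebra k G) (s : MonoidAlgebra k Gt) (b : augIdeal k Gt),
      z = (a * phiHat k φ s) ⊗ₜ[k] b - a ⊗ₜ[k] (s • b)}

end

section Aux

variable (k : Type*) [CommRing k] {Gt G : Type*} [Group Gt] [Group G] (φ : Gt →* G)
  (σ : G → Gt) (hσ : ∀ g, φ (σ g) = g)

/-- The "factor set" element `σ(g)·h·σ(g·φ(h))⁻¹ ∈ K`. -/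
noncomputable def kap (g : G) (h : Gt) : φ.ker :=
  ⟨σ g * h * (σ (g * φ h))⁻¹, by
    simp only [MonoidHom.mem_ker, map_mul, map_inv, hσ]
    group⟩

lemma kap_mul (g : G) (t h : Gt) :
    kap φ σ hσ g (t * h) = kap φ σ hσ g t * kap φ σ hσ (g * φ t) h := by
  ext
  simp only [kap, Subgroup.coe_mul, map_mul, mul_assoc]
  group

/-- The target element `1 ⊗ [kap g h]` of `k ⊗ K_ab`. -/
noncomputable def vv (g : G) (h : Gt) : k ⊗[ℤ] Additive (Abelianization φ.ker) :=
  (1 : k) ⊗ₜ[ℤ] Additive.ofMul (Abelianization.of (kap φ σ hσ g h))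

lemma vv_mul (g : G) (t h : Gt) :
    vv k φ σ hσ g (t * h) = vv k φ σ hσ (g * φ t) h + vv k φ σ hσ g t := by
  rw [vv, kap_mul φ σ hσ, map_mul]
  rw [show Additive.ofMul (Abelianization.of (kap φ σ hσ g t) *
      Abelianization.of (kap φ σ hσ (g * φ t) h)) =
      Additive.ofMul (Abelianization.of (kap φ σ hσ g t)) +
      Additive.ofMul (Abelianization.of (kap φ σ hσ (g * φ t) h)) from rfl]
  rw [TensorProduct.tmul_add]
  rw [add_comm]
  rfl

/-- `L g : kG̃ →ₗ k ⊗ K_ab`, `h ↦ 1 ⊗ [kap g h]`. -/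
noncomputable def LL (g : G) :
    MonoidAlgebra k Gt →ₗ[k] k ⊗[ℤ] Additive (Abelianization φ.ker) :=
  Finsupp.lift _ k Gt (fun h => vv k φ σ hσ g h) ∘ₗ (MonoidAlgebra.coeffLinearEquiv k).toLinearMap

lemma LL_single (g : G) (h : Gt) (c : k) :
    LL k φ σ hσ g (MonoidAlgebra.single h c) = c • vv k φ σ hσ g h := by
  rw [LL, LinearMap.comp_apply, LinearEquiv.coe_coe, MonoidAlgebra.coeffLinearEquiv_apply,
    MonoidAlgebra.coeff_single]
  erw [Finsupp.lift_apply, Finsupp.sum_single_index (by rw [zero_smul])]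

lemma augHom_single (h : Gt) (c : k) :
    augHom k Gt (MonoidAlgebra.single h c) = c := by
  simp [augHom, MonoidAlgebra.lift_single]

lemma LL_mul_single (g : G) (t : Gt) (x : MonoidAlgebra k Gt) :
    LL k φ σ hσ g (MonoidAlgebra.single t 1 * x)
      = LL k φ σ hσ (g * φ t) x + augHom k Gt x • vv k φ σ hσ g t := by
  induction x using MonoidAlgebra.induction_linear with
  | zero => simp
  | add f g hf hg =>
      rw [mul_add, map_add, hf, hg, map_add, map_add, add_smul]; abel
  | single h c =>
      rw [MonoidAlgebra.single_mul_single, one_mul, LL_single, LL_single, augHom_single,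
        vv_mul k φ σ hσ g t h, smul_add]

/-- The bilinear-in-disguise map `kG →ₗ (kG̃ →ₗ k ⊗ K_ab)`. -/
noncomputable def PP :
    MonoidAlgebra k G →ₗ[k]
      (MonoidAlgebra k Gt →ₗ[k] k ⊗[ℤ] Additive (Abelianization φ.ker)) :=
  Finsupp.lift _ k G (fun g => LL k φ σ hσ g) ∘ₗ (MonoidAlgebra.coeffLinearEquiv k).toLinearMap

lemma PP_single (g : G) (c : k) :
    PP k φ σ hσ (MonoidAlgebra.single g c) = c • LL k φ σ hσ g := by
  rw [PP, LinearMap.comp_apply, LinearEquiv.coe_coe, MonoidAlgebra.coeffLinearEquiv_apply,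
    MonoidAlgebra.coeff_single]
  erw [Finsupp.lift_apply, Finsupp.sum_single_index (by rw [zero_smul])]

lemma phiHat_single (t : Gt) (d : k) :
    phiHat k φ (MonoidAlgebra.single t d) = MonoidAlgebra.single (φ t) d := by
  simp [phiHat, MonoidAlgebra.mapDomainAlgHom]

lemma PP_balanced (a : MonoidAlgebra k G) (s : MonoidAlgebra k Gt)
    (x : MonoidAlgebra k Gt) (hx : augHom k Gt x = 0) :
    PP k φ σ hσ (a * phiHat k φ s) x = PP k φ σ hσ a (s * x) := by
  induction a using MonoidAlgebra.induction_linear with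
  | zero => simp
  | add f g hf hg => rw [add_mul, map_add, map_add]; simp [hf, hg]
  | single g c =>
    induction s using MonoidAlgebra.induction_linear with
    | zero => simp
    | add f g hf hg =>
        rw [map_add, mul_add, map_add, add_mul, map_add]
        simp only [LinearMap.add_apply] at *
        rw [hf, hg]
    | single t d =>
        have h1 : phiHat k φ (MonoidAlgebra.single t d) = MonoidAlgebra.single (φ t) d := by
          simp [phiHat, MonoidAlgebra.mapDomainAlgHom]
        have h2 : MonoidAlgebra.single t d * x = d • (MonoidAlgebra.single t 1 * x) := by
          rw [show (MonoidAlgebra.single t d : MonoidAlgebra k Gt)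
            = d • MonoidAlgebra.single t 1 by
              rw [MonoidAlgebra.smul_single', mul_one], smul_mul_assoc]
        rw [h1, MonoidAlgebra.single_mul_single, PP_single, PP_single, h2, map_smul,
          LinearMap.smul_apply, LinearMap.smul_apply, LL_mul_single k φ σ hσ g t x, hx,
          zero_smul, add_zero, smul_smul]
        rw [mul_comm c d]

/-- The full map `F : kG ⊗ kI_{G̃} → k ⊗ K_ab`. -/
noncomputable def FF :
    (MonoidAlgebra k G) ⊗[k] (augIdeal k Gt) →ₗ[k]
      k ⊗[ℤ] Additive (Abelianization φ.ker) :=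
  TensorProduct.lift <| LinearMap.mk₂ k
    (fun a b => PP k φ σ hσ a (b : MonoidAlgebra k Gt))
    (fun a a' b => by simp only [map_add, LinearMap.add_apply])
    (fun c a b => by simp only [map_smul, LinearMap.smul_apply])
    (fun a b b' => by simp only [Submodule.coe_add, map_add])
    (fun c a b => by simp only [Submodule.coe_smul_of_tower, map_smul])

lemma FF_balancing : balancingRel k φ ≤ LinearMap.ker (FF k φ σ hσ) := by
  rw [balancingRel, Submodule.span_le]
  rintro z ⟨a, s, b, rfl⟩
  simp only [SetLike.mem_coe, LinearMap.mem_ker, map_sub, FF, TensorProduct.lift.tmul,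
    LinearMap.mk₂_apply]
  have hb : augHom k Gt (b : MonoidAlgebra k Gt) = 0 := b.2
  rw [show ((s • b : augIdeal k Gt) : MonoidAlgebra k Gt) = s * (b : MonoidAlgebra k Gt) from rfl,
    PP_balanced k φ σ hσ a s _ hb, sub_self]

end Aux

/-- **Proposition (kernels modulo `k`).** Let `φ : G̃ → G` be a surjective group homomorphism
with kernel `K`.  If the natural homomorphism of `kG`-modules
`α : kG ⊗_{kG̃} kI_{G̃} → kI_G`, `a ⊗ b ↦ a·φ(b)`, is an isomorphism — equivalently, if the
`k`-linear map `β : kG ⊗_k kI_{G̃} → kG` has range exactly `kI_G` and kernel exactly the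
submodule of balancing relations — then `k ⊗_ℤ K_ab = 0`. -/
theorem tensor_abelianization_ker_eq_zero (k : Type*) [CommRing k]
    (Gt G : Type*) [Group Gt] [Group G] (φ : Gt →* G) (hφ : Function.Surjective φ)
    (hrange : LinearMap.range (betaMap k φ) =
      Submodule.restrictScalars k (augIdeal k G))
    (hker : LinearMap.ker (betaMap k φ) = balancingRel k φ) :
    Subsingleton (k ⊗[ℤ] (Additive (Abelianization φ.ker))) := by
  classical
  set σ : G → Gt := fun g => if g = 1 then 1 else Function.surjInv hφ g with hσdef
  have hσ : ∀ g, φ (σ g) = g := by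
    intro g
    by_cases h : g = 1 <;> simp [σ, h, Function.surjInv_eq hφ]
  have hσ1 : σ 1 = 1 := by simp [σ]
  have hPP1 : PP k φ σ hσ (1 : MonoidAlgebra k G) = LL k φ σ hσ 1 := by
    rw [MonoidAlgebra.one_def, PP_single, one_smul]
  -- main claim: for every κ in the kernel, 1 ⊗ [κ] = 0
  have key : ∀ κ : φ.ker,
      (1 : k) ⊗ₜ[ℤ] Additive.ofMul (Abelianization.of κ) = 0 := by
    intro κ
    have hκ1 : φ (κ : Gt) = 1 := κ.2
    have hbmem : (MonoidAlgebra.single (κ : Gt) 1 - 1 : MonoidAlgebra k Gt) ∈ augIdeal k Gt := by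
      have : augHom k Gt (MonoidAlgebra.single (κ : Gt) 1 - 1) = 0 := by
        rw [map_sub, augHom_single, map_one, sub_self]
      exact this
    set b : augIdeal k Gt := ⟨_, hbmem⟩ with hbdef
    have hcoe : (b : MonoidAlgebra k Gt)
        = MonoidAlgebra.single (κ : Gt) 1 - MonoidAlgebra.single (1 : Gt) 1 := by
      rw [← MonoidAlgebra.one_def]
    set z : (MonoidAlgebra k G) ⊗[k] (augIdeal k Gt) := (1 : MonoidAlgebra k G) ⊗ₜ[k] b
      with hzdef
    have hz : z ∈ LinearMap.ker (betaMap k φ) := by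
      rw [LinearMap.mem_ker, hzdef]
      simp only [betaMap, TensorProduct.lift.tmul, LinearMap.mk₂_apply, one_mul]
      rw [map_sub, phiHat_single, hκ1, map_one, ← MonoidAlgebra.one_def, sub_self]
    rw [hker] at hz
    have h0 : FF k φ σ hσ z = 0 := FF_balancing k φ σ hσ hz
    have e1 : kap φ σ hσ (1 : G) (κ : Gt) = κ := by
      ext; simp [kap, hκ1, hσ1]
    have e2 : kap φ σ hσ (1 : G) (1 : Gt) = 1 := by
      ext; simp [kap, hσ1]
    have hF : FF k φ σ hσ z
        = (1 : k) ⊗ₜ[ℤ] Additive.ofMul (Abelianization.of κ) := by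
      rw [hzdef]
      simp only [FF, TensorProduct.lift.tmul, LinearMap.mk₂_apply]
      rw [hPP1, hcoe, map_sub, LL_single, LL_single,
        one_smul, one_smul]
      simp [vv, e1, e2]
    rw [h0] at hF
    exact hF.symm
  refine subsingleton_of_forall_eq 0 fun z => ?_
  induction z using TensorProduct.induction_on with
  | zero => rfl
  | tmul c x =>
      obtain ⟨κ, hκ⟩ := Quot.exists_rep (Additive.toMul x)
      have hx : x = Additive.ofMul (Abelianization.of κ) :=
        congrArg Additive.ofMul hκ.symm
      rw [hx, show (c ⊗ₜ[ℤ] Additive.ofMul (Abelianization.of κ) :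
          k ⊗[ℤ] Additive (Abelianization φ.ker))
        = c • ((1 : k) ⊗ₜ[ℤ] Additive.ofMul (Abelianization.of κ)) from by
          rw [TensorProduct.smul_tmul', smul_eq_mul, mul_one],
        key κ, smul_zero]
  | add x y hx hy => rw [hx, hy, add_zero]
end

section
/- Let R be a subring of a division ring D and let M be a left R-module. Then M is D-torsion-free if and only if there exist a left D-module N and an injective homomorphism of R-modules M → N (where N is regarded as an R-module by restriction of scalars). -/
open scoped TensorProduct

universe u

/-- The balancing relations defining the tensor product `D ⊗_R M` over the (possibly
noncommutative) ring `R` as a quotient of `D ⊗_ℤ M`. -/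
def tensorRel (D : Type u) [DivisionRing D] (R : Subring D)
    (M : Type u) [AddCommGroup M] [Module R M] : Submodule ℤ (D ⊗[ℤ] M) :=
  Submodule.span ℤ
    {x | ∃ (d : D) (r : R) (m : M), x = (d * (r : D)) ⊗ₜ[ℤ] m - d ⊗ₜ[ℤ] (r • m)}

/-- The tensor product `D ⊗_R M` of the right `R`-module `D` and the left `R`-module `M`,
realized as the quotient of `D ⊗_ℤ M` by the balancing relations. -/
abbrev NCTensor (D : Type u) [DivisionRing D] (R : Subring D)
    (M : Type u) [AddCommGroup M] [Module R M] :=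
  (D ⊗[ℤ] M) ⧸ tensorRel D R M

section

variable (D : Type u) [DivisionRing D] (R : Subring D)
variable (M : Type u) [AddCommGroup M] [Module R M]

/-- Left multiplication by `d : D` on `D ⊗_ℤ M`. -/
noncomputable def lmulAux (d : D) : (D ⊗[ℤ] M) →ₗ[ℤ] (D ⊗[ℤ] M) :=
  TensorProduct.map ((AddMonoidHom.mulLeft d).toIntLinearMap) LinearMap.id

lemma lmulAux_rel (d : D) :
    tensorRel D R M ≤ (tensorRel D R M).comap (lmulAux D M d) := by
  refine Submodule.span_le.mpr ?_
  rintro x ⟨a, r, m, rfl⟩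
  show lmulAux D M d ((a * (r : D)) ⊗ₜ[ℤ] m - a ⊗ₜ[ℤ] (r • m)) ∈ tensorRel D R M
  have h : lmulAux D M d ((a * (r : D)) ⊗ₜ[ℤ] m - a ⊗ₜ[ℤ] (r • m)) =
      ((d * a) * (r : D)) ⊗ₜ[ℤ] m - (d * a) ⊗ₜ[ℤ] (r • m) := by
    rw [map_sub, mul_assoc]
    first
    | rfl
    | (erw [TensorProduct.map_tmul, TensorProduct.map_tmul]; rfl)
  rw [h]
  exact Submodule.subset_span ⟨d * a, r, m, rfl⟩

/-- Left multiplication by `d : D` on `D ⊗_R M`. -/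
noncomputable def lmulQ (d : D) : NCTensor D R M →ₗ[ℤ] NCTensor D R M :=
  Submodule.mapQ _ _ (lmulAux D M d) (lmulAux_rel D R M d)

lemma lmulQ_mk_tmul (d a : D) (m : M) :
    lmulQ D R M d (Submodule.Quotient.mk (a ⊗ₜ[ℤ] m)) =
      Submodule.Quotient.mk ((d * a) ⊗ₜ[ℤ] m) := by
  show Submodule.Quotient.mk (lmulAux D M d (a ⊗ₜ[ℤ] m)) = _
  first
  | rfl
  | (erw [lmulAux, TensorProduct.map_tmul]; rfl)

lemma NCTensor.inductionOn {P : NCTensor D R M → Prop} (x : NCTensor D R M)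
    (zero : P 0)
    (tmul : ∀ (a : D) (m : M), P (Submodule.Quotient.mk (a ⊗ₜ[ℤ] m)))
    (add : ∀ x y, P x → P y → P (x + y)) : P x := by
  obtain ⟨y, rfl⟩ := Submodule.Quotient.mk_surjective _ x
  induction y using TensorProduct.induction_on with
  | zero => simpa using zero
  | tmul a m => exact tmul a m
  | add y z hy hz =>
      rw [Submodule.Quotient.mk_add]
      exact add _ _ hy hz

noncomputable instance : SMul D (NCTensor D R M) :=
  ⟨fun d x => lmulQ D R M d x⟩

lemma nct_smul_def (d : D) (x : NCTensor D R M) : d • x = lmulQ D R M d x := rfl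

/-- The left `D`-module structure on `D ⊗_R M`. -/
noncomputable instance : Module D (NCTensor D R M) where
  one_smul x := by
    refine NCTensor.inductionOn D R M (P := fun z => (1 : D) • z = z) x ?_ ?_ ?_
    · simp only [nct_smul_def, map_zero]
    · intro a m
      rw [nct_smul_def, lmulQ_mk_tmul, one_mul]
    · intro x y hx hy
      rw [nct_smul_def, map_add, ← nct_smul_def, ← nct_smul_def, hx, hy]
  mul_smul d e x := by
    refine NCTensor.inductionOn D R M (P := fun z => (d * e) • z = d • e • z) x ?_ ?_ ?_
    · simp only [nct_smul_def, map_zero]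
    · intro a m
      simp only [nct_smul_def, lmulQ_mk_tmul, mul_assoc]
    · intro x y hx hy
      simp only [nct_smul_def, map_add] at hx hy ⊢
      rw [hx, hy]
  smul_zero d := map_zero (lmulQ D R M d)
  smul_add d x y := map_add (lmulQ D R M d) x y
  add_smul d e x := by
    refine NCTensor.inductionOn D R M (P := fun z => (d + e) • z = d • z + e • z) x ?_ ?_ ?_
    · simp only [nct_smul_def, map_zero, add_zero]
    · intro a m
      simp only [nct_smul_def, lmulQ_mk_tmul, add_mul]
      rw [TensorProduct.add_tmul, Submodule.Quotient.mk_add]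
    · intro x y hx hy
      simp only [nct_smul_def, map_add] at hx hy ⊢
      rw [hx, hy]
      abel
  zero_smul x := by
    refine NCTensor.inductionOn D R M (P := fun z => (0 : D) • z = 0) x ?_ ?_ ?_
    · simp only [nct_smul_def, map_zero]
    · intro a m
      rw [nct_smul_def, lmulQ_mk_tmul, zero_mul, TensorProduct.zero_tmul,
        Submodule.Quotient.mk_zero]
    · intro x y hx hy
      rw [nct_smul_def, map_add, ← nct_smul_def, ← nct_smul_def, hx, hy, add_zero]

/-- The canonical map `M → D ⊗_R M`, `m ↦ 1 ⊗ m`. -/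
noncomputable def toNCTensor : M → NCTensor D R M :=
  fun m => Submodule.Quotient.mk ((1 : D) ⊗ₜ[ℤ] m)

/-- A left `R`-module `M` is *`D`-torsion-free* if the canonical map `M → D ⊗_R M`,
`m ↦ 1 ⊗ m`, is injective. -/
def IsDTorsionFree : Prop := Function.Injective (toNCTensor D R M)

end

/-- Auxiliary bilinear map `(d, m) ↦ d • f m`. -/
noncomputable def bilAux {D : Type u} [DivisionRing D] {M : Type u} [AddCommGroup M]
    {N : Type u} [AddCommGroup N] [Module D N] (f : M →+ N) : D →ₗ[ℤ] M →ₗ[ℤ] N where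
  toFun d :=
    { toFun := fun m => d • f m
      map_add' := fun x y => by simp [smul_add]
      map_smul' := fun n x => by simp [smul_comm n d] }
  map_add' d e := by ext m; simp [add_smul]
  map_smul' n d := by
    ext m
    simp only [LinearMap.coe_mk, AddHom.coe_mk, RingHom.id_apply, LinearMap.smul_apply,
      zsmul_eq_mul, mul_smul, Int.cast_smul_eq_zsmul]

@[simp] lemma bilAux_apply {D : Type u} [DivisionRing D] {M : Type u} [AddCommGroup M]
    {N : Type u} [AddCommGroup N] [Module D N] (f : M →+ N) (d : D) (m : M) :
    bilAux f d m = d • f m := rfl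

/-- **Lemma (criterion for `D`-torsion-freeness).** Let `R` be a subring of a division ring `D`
and `M` a left `R`-module.  Then `M` is `D`-torsion-free if and only if there is a left
`D`-module `N` and an injective homomorphism of `R`-modules `M → N`, where `N` is an
`R`-module by restriction of scalars along `R ⊆ D`. -/
theorem isDTorsionFree_iff_embeds_in_D_module (D : Type u) [DivisionRing D] (R : Subring D)
    (M : Type u) [AddCommGroup M] [Module R M] :
    IsDTorsionFree D R M ↔
      ∃ (N : Type u) (_ : AddCommGroup N) (_ : Module D N) (f : M →+ N),
        Function.Injective f ∧ ∀ (r : R) (m : M), f (r • m) = (r : D) • f m := by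
  constructor
  · intro h
    refine ⟨NCTensor D R M, inferInstance, inferInstance,
      { toFun := toNCTensor D R M
        map_zero' := by
          simp [toNCTensor, TensorProduct.tmul_zero]
        map_add' := fun x y => by
          simp [toNCTensor, TensorProduct.tmul_add, Submodule.Quotient.mk_add] }, h, ?_⟩
    intro r m
    change toNCTensor D R M (r • m) = (r : D) • toNCTensor D R M m
    simp only [AddMonoidHom.coe_mk, ZeroHom.coe_mk, toNCTensor, nct_smul_def, lmulQ_mk_tmul,
      mul_one]
    rw [Submodule.Quotient.eq, ← neg_sub]
    refine neg_mem ?_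
    have : ((1 : D) * (r : D)) ⊗ₜ[ℤ] m - (1 : D) ⊗ₜ[ℤ] (r • m) ∈ tensorRel D R M :=
      Submodule.subset_span ⟨1, r, m, rfl⟩
    rwa [one_mul] at this
  · rintro ⟨N, _, _, f, hinj, hsmul⟩
    set g : (D ⊗[ℤ] M) →ₗ[ℤ] N := TensorProduct.lift (bilAux f) with hg
    have hgt : ∀ (d : D) (m : M), g (d ⊗ₜ[ℤ] m) = d • f m := fun d m => by
      rw [hg]; exact TensorProduct.lift.tmul d m
    have hker : tensorRel D R M ≤ LinearMap.ker g := by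
      rw [tensorRel, Submodule.span_le]
      rintro x ⟨d, r, m, rfl⟩
      show g ((d * (r : D)) ⊗ₜ[ℤ] m - d ⊗ₜ[ℤ] (r • m)) = 0
      simp only [SetLike.mem_coe, LinearMap.mem_ker, map_sub, hgt,
        bilAux_apply]
      rw [hsmul, mul_smul, sub_self]
    set gq : NCTensor D R M →ₗ[ℤ] N := Submodule.liftQ _ g hker with hgq
    intro m₁ m₂ hmm
    have h2 : gq (toNCTensor D R M m₁) = gq (toNCTensor D R M m₂) := by rw [hmm]
    change g (1 ⊗ₜ[ℤ] m₁) = g (1 ⊗ₜ[ℤ] m₂) at h2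
    simp only [hgq, toNCTensor, Submodule.liftQ_apply, hgt,
      bilAux_apply, one_smul] at h2
    exact hinj h2
end

section
/- Let U and V be torsion-free groups, let v1 ∈ U and v2 ∈ V be nontrivial elements, let n1, n2 ≥ 2 be integers, and set u = v1^{n1} ∈ U and v = v2^{n2} ∈ V, assumed nontrivial. Let W = U *_{u=v} V be the amalgamated free product of U and V identifying u with v (the pushout of the inclusions of ⟨u⟩ into U and of ⟨v⟩ into V along u ↦ v). Then the centralizer in W of the image of u is not abelian; in particular it is not cyclic. -/
/-- The amalgamated free product `U *_{u = v} V`: the quotient of the free product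
`U * V` by the normal closure of `u * v⁻¹`. -/
def Amalgam (U V : Type*) [Group U] [Group V] (u : U) (v : V) :=
  Monoid.Coprod U V ⧸
    Subgroup.normalClosure {Monoid.Coprod.inl u * (Monoid.Coprod.inr v)⁻¹}

instance (U V : Type*) [Group U] [Group V] (u : U) (v : V) : Group (Amalgam U V u v) :=
  inferInstanceAs (Group (Monoid.Coprod U V ⧸
    Subgroup.normalClosure {Monoid.Coprod.inl u * (Monoid.Coprod.inr v)⁻¹}))

/-- Old Mathlib's `Monoid.IsTorsionFree` (removed since): no nontrivial element has finite order. -/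
def Monoid.IsTorsionFree (G : Type*) [Monoid G] : Prop :=
  ∀ g : G, g ≠ 1 → ¬IsOfFinOrder g

open Monoid

section AuxDefs

universe u v

variable (U : Type u) (V : Type v) [Group U] [Group V]

/-- The two-element family `![ULift U, ULift V]` indexed by `Bool`. -/
def AmalgFam : Bool → Type (max u v) :=
  fun b => cond b (ULift.{v} U) (ULift.{u} V)

instance amalgFamGroup : ∀ b, Group (AmalgFam U V b)
  | true => inferInstanceAs (Group (ULift U))
  | false => inferInstanceAs (Group (ULift V))

variable {U V}

/-- The maps from `Multiplicative ℤ` into the family, sending the generator to `u` resp `v`. -/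
def amalgPhi (u : U) (v : V) : ∀ b, Multiplicative ℤ →* AmalgFam U V b
  | true => (MulEquiv.ulift.symm.toMonoidHom).comp (zpowersHom U u)
  | false => (MulEquiv.ulift.symm.toMonoidHom).comp (zpowersHom V v)

end AuxDefs

lemma amalgPhi_injective {U V : Type*} [Group U] [Group V] {u : U} {v : V}
    (hu : ¬ IsOfFinOrder u) (hv : ¬ IsOfFinOrder v) :
    ∀ b, Function.Injective (amalgPhi u v b)
  | true => (MulEquiv.ulift.symm.injective).comp
      (((injective_zpow_iff_not_isOfFinOrder).2 hu).comp Multiplicative.toAdd.injective)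
  | false => (MulEquiv.ulift.symm.injective).comp
      (((injective_zpow_iff_not_isOfFinOrder).2 hv).comp Multiplicative.toAdd.injective)

lemma pow_zpow_ne {G : Type*} [Group G] {g : G} (hg : ¬ IsOfFinOrder g) {n : ℕ}
    (hn : 2 ≤ n) (k : ℤ) {e : ℤ} (he : e = 1 ∨ e = -1) : (g ^ n) ^ k ≠ g ^ e := by
  intro h
  rw [← zpow_natCast, ← zpow_mul] at h
  have hnk : (n : ℤ) * k = e := (injective_zpow_iff_not_isOfFinOrder.2 hg) h
  have hdvd : (n : ℤ) ∣ e := Dvd.intro k hnk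
  have h1 : (n : ℤ) ∣ 1 := by
    rcases he with rfl | rfl
    · exact hdvd
    · exact dvd_neg.1 hdvd
  have := Int.le_of_dvd one_pos h1
  omega

/-- The key non-commutation fact in the pushout. -/
lemma pushout_not_commute {U V : Type*} [Group U] [Group V]
    (htU : Monoid.IsTorsionFree U) (htV : Monoid.IsTorsionFree V)
    (v1 : U) (v2 : V) (hv1 : v1 ≠ 1) (hv2 : v2 ≠ 1)
    (n1 n2 : ℕ) (hn1 : 2 ≤ n1) (hn2 : 2 ≤ n2)
    (hu : v1 ^ n1 ≠ 1) (hv : v2 ^ n2 ≠ 1) :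
    PushoutI.of (φ := amalgPhi (v1 ^ n1) (v2 ^ n2)) true (ULift.up v1) *
      PushoutI.of (φ := amalgPhi (v1 ^ n1) (v2 ^ n2)) false (ULift.up v2) ≠
    PushoutI.of (φ := amalgPhi (v1 ^ n1) (v2 ^ n2)) false (ULift.up v2) *
      PushoutI.of (φ := amalgPhi (v1 ^ n1) (v2 ^ n2)) true (ULift.up v1) := by
  set φ := amalgPhi (v1 ^ n1) (v2 ^ n2) with hφ
  intro hcomm
  have hfo1 : ¬ IsOfFinOrder v1 := htU v1 hv1
  have hfo2 : ¬ IsOfFinOrder v2 := htV v2 hv2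
  -- the reduced word v1 v2 v1⁻¹ v2⁻¹
  have hup : ∀ (g : U), g ≠ 1 → (ULift.up g : AmalgFam U V true) ≠ 1 := by
    intro g hg h; exact hg (congrArg ULift.down h)
  have hup' : ∀ (g : V), g ≠ 1 → (ULift.up g : AmalgFam U V false) ≠ 1 := by
    intro g hg h; exact hg (congrArg ULift.down h)
  let w : CoprodI.Word (AmalgFam U V) :=
    ⟨[⟨true, ULift.up v1⟩, ⟨false, ULift.up v2⟩,
      ⟨true, ULift.up v1⁻¹⟩, ⟨false, ULift.up v2⁻¹⟩],
      by
        intro l hl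
        simp only [List.mem_cons, List.mem_singleton, List.not_mem_nil] at hl
        rcases hl with rfl | rfl | rfl | hl | hl
        · exact hup v1 hv1
        · exact hup' v2 hv2
        · exact hup v1⁻¹ (inv_ne_one.2 hv1)
        · subst hl; exact hup' v2⁻¹ (inv_ne_one.2 hv2)
        · exact hl.elim,
      by simp⟩
  have hrange1 : ∀ (g : U), (∀ k : ℤ, (v1 ^ n1) ^ k ≠ g) →
      (ULift.up g : AmalgFam U V true) ∉ (φ true).range := by
    rintro g hg ⟨m, hm⟩
    refine hg (Multiplicative.toAdd m) ?_
    have := congrArg ULift.down hm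
    exact this
  have hrange2 : ∀ (g : V), (∀ k : ℤ, (v2 ^ n2) ^ k ≠ g) →
      (ULift.up g : AmalgFam U V false) ∉ (φ false).range := by
    rintro g hg ⟨m, hm⟩
    refine hg (Multiplicative.toAdd m) ?_
    have := congrArg ULift.down hm
    exact this
  have hred : PushoutI.Reduced φ w := by
    intro l hl
    simp only [w, List.mem_cons, List.mem_singleton, List.not_mem_nil] at hl
    rcases hl with rfl | rfl | rfl | hl | hl
    · exact hrange1 v1 (fun k h => pow_zpow_ne hfo1 hn1 k (Or.inl rfl) (by simpa using h))
    · exact hrange2 v2 (fun k h => pow_zpow_ne hfo2 hn2 k (Or.inl rfl) (by simpa using h))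
    · exact hrange1 v1⁻¹ (fun k h => pow_zpow_ne hfo1 hn1 k (Or.inr rfl) (by simpa using h))
    · subst hl
      exact hrange2 v2⁻¹ (fun k h => pow_zpow_ne hfo2 hn2 k (Or.inr rfl) (by simpa using h))
    · exact hl.elim
  have hprod : PushoutI.ofCoprodI (φ := φ) w.prod =
      PushoutI.of (φ := φ) true (ULift.up v1) * PushoutI.of (φ := φ) false (ULift.up v2) *
      (PushoutI.of (φ := φ) true (ULift.up v1))⁻¹ *
      (PushoutI.of (φ := φ) false (ULift.up v2))⁻¹ := by
    simp only [w, CoprodI.Word.prod, List.map_cons, List.prod_cons, List.map_nil,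
      List.prod_nil, map_mul, PushoutI.ofCoprodI_of, mul_one]
    have h1 : (ULift.up v1⁻¹ : AmalgFam U V true) = ((ULift.up v1 : AmalgFam U V true))⁻¹ := rfl
    have h2 : (ULift.up v2⁻¹ : AmalgFam U V false) = ((ULift.up v2 : AmalgFam U V false))⁻¹ := rfl
    rw [h1, h2]; simp only [map_inv, mul_assoc]; rfl
  have hone : PushoutI.ofCoprodI (φ := φ) w.prod = 1 := by
    rw [hprod, hcomm]
    group
  have hempty := PushoutI.Reduced.eq_empty_of_mem_range
    (amalgPhi_injective (htU _ hu) (htV _ hv)) hred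
    (hone ▸ ((PushoutI.base φ).range.one_mem))
  simpa [w, CoprodI.Word.empty] using congrArg CoprodI.Word.toList hempty

section MainAux

variable {U V : Type*} [Group U] [Group V]

/-- The canonical map from the free product to the pushout. -/
def amalgHom (u : U) (v : V) : Monoid.Coprod U V →* PushoutI (amalgPhi u v) :=
  Coprod.lift ((PushoutI.of (φ := amalgPhi u v) true).comp MulEquiv.ulift.symm.toMonoidHom)
    ((PushoutI.of (φ := amalgPhi u v) false).comp MulEquiv.ulift.symm.toMonoidHom)

lemma amalgHom_inl (u : U) (v : V) (x : U) :
    amalgHom u v (Coprod.inl x) = PushoutI.of (φ := amalgPhi u v) true (ULift.up x) := by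
  simp [amalgHom]; rfl

lemma amalgHom_inr (u : U) (v : V) (x : V) :
    amalgHom u v (Coprod.inr x) = PushoutI.of (φ := amalgPhi u v) false (ULift.up x) := by
  simp [amalgHom]; rfl

lemma amalgHom_rel (u : U) (v : V) :
    amalgHom u v (Coprod.inl u * (Coprod.inr v)⁻¹) = 1 := by
  rw [map_mul, map_inv, amalgHom_inl, amalgHom_inr, mul_inv_eq_one]
  have h1 : (ULift.up u : AmalgFam U V true) = amalgPhi u v true (Multiplicative.ofAdd 1) := by
    apply congrArg ULift.up
    simp [amalgPhi]
  have h2 : (ULift.up v : AmalgFam U V false) = amalgPhi u v false (Multiplicative.ofAdd 1) := by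
    apply congrArg ULift.up
    simp [amalgPhi]
  rw [h1, h2, PushoutI.of_apply_eq_base, PushoutI.of_apply_eq_base]

/-- The induced map from the amalgam to the pushout. -/
def amalgQuotHom (u : U) (v : V) : Amalgam U V u v →* PushoutI (amalgPhi u v) :=
  QuotientGroup.lift _ (amalgHom u v) (by
    intro x hx
    refine Subgroup.normalClosure_le_normal (N := (amalgHom u v).ker) ?_ hx
    rw [Set.singleton_subset_iff]
    exact amalgHom_rel u v)

end MainAux


/-- **Proper powers amalgamated give non-abelian centralizers.** Let `U`, `V` be torsion-free
groups, `v1 ∈ U`, `v2 ∈ V` nontrivial, `n1, n2 ≥ 2`, and `u = v1 ^ n1 ≠ 1`, `v = v2 ^ n2 ≠ 1`.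
In the amalgamated free product `W = U *_{u = v} V`, the centralizer of the image of `u` is
not abelian; in particular it is not cyclic. -/
theorem amalgam_centralizer_not_commutative (U V : Type*) [Group U] [Group V]
    (htU : Monoid.IsTorsionFree U) (htV : Monoid.IsTorsionFree V)
    (v1 : U) (v2 : V) (hv1 : v1 ≠ 1) (hv2 : v2 ≠ 1)
    (n1 n2 : ℕ) (hn1 : 2 ≤ n1) (hn2 : 2 ≤ n2)
    (hu : v1 ^ n1 ≠ 1) (hv : v2 ^ n2 ≠ 1) :
    ¬ IsMulCommutative (Subgroup.centralizer
        ({QuotientGroup.mk (Monoid.Coprod.inl (v1 ^ n1))} :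
          Set (Amalgam U V (v1 ^ n1) (v2 ^ n2)))) ∧
    ¬ IsCyclic (Subgroup.centralizer
        ({QuotientGroup.mk (Monoid.Coprod.inl (v1 ^ n1))} :
          Set (Amalgam U V (v1 ^ n1) (v2 ^ n2)))) := by
  set W := Amalgam U V (v1 ^ n1) (v2 ^ n2) with hW
  set N : Subgroup (Monoid.Coprod U V) := Subgroup.normalClosure
      {Monoid.Coprod.inl (v1 ^ n1) * (Monoid.Coprod.inr (v2 ^ n2))⁻¹} with hN
  set C := Subgroup.centralizer
      ({QuotientGroup.mk (Monoid.Coprod.inl (v1 ^ n1))} : Set W) with hC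
  set a : W := QuotientGroup.mk (Monoid.Coprod.inl v1) with ha
  set b : W := QuotientGroup.mk (Monoid.Coprod.inr v2) with hb
  -- the distinguished element of the centralizer
  have hmk_pow : ∀ (x : Monoid.Coprod U V) (n : ℕ),
      (QuotientGroup.mk (x ^ n) : W) = (QuotientGroup.mk x : W) ^ n := fun x n => by
    exact QuotientGroup.mk_pow N x n
  have hua : (QuotientGroup.mk (Monoid.Coprod.inl (v1 ^ n1)) : W) = a ^ n1 := by
    rw [ha]; exact (congrArg (QuotientGroup.mk (s := N)) (map_pow Monoid.Coprod.inl v1 n1)).trans (hmk_pow _ _)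
  have huv : (QuotientGroup.mk (Monoid.Coprod.inl (v1 ^ n1)) : W) =
      (QuotientGroup.mk (Monoid.Coprod.inr (v2 ^ n2)) : W) := by
    have hmem : Monoid.Coprod.inl (v1 ^ n1) * (Monoid.Coprod.inr (v2 ^ n2))⁻¹ ∈ N :=
      Subgroup.subset_normalClosure (Set.mem_singleton _)
    have h1 : (QuotientGroup.mk (Monoid.Coprod.inl (v1 ^ n1) *
        (Monoid.Coprod.inr (v2 ^ n2))⁻¹) : W) = 1 :=
      (QuotientGroup.eq_one_iff _).2 hmem
    rw [QuotientGroup.mk_mul, QuotientGroup.mk_inv, mul_inv_eq_one] at h1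
    exact h1
  have hub : (QuotientGroup.mk (Monoid.Coprod.inl (v1 ^ n1)) : W) = b ^ n2 := by
    rw [huv, hb]; exact (congrArg (QuotientGroup.mk (s := N)) (map_pow Monoid.Coprod.inr v2 n2)).trans (hmk_pow _ _)
  have haC : a ∈ C := by
    refine Subgroup.mem_centralizer_singleton_iff.2 ?_
    rw [hua]
    exact ((Commute.refl a).pow_left n1).symm.eq
  have hbC : b ∈ C := by
    refine Subgroup.mem_centralizer_singleton_iff.2 ?_
    rw [hub]
    exact ((Commute.refl b).pow_left n2).symm.eq
  -- a and b do not commute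
  have hab : a * b ≠ b * a := by
    intro h
    have hF := congrArg (amalgQuotHom (v1 ^ n1) (v2 ^ n2)) h
    have hFa : amalgQuotHom (v1 ^ n1) (v2 ^ n2) a =
        PushoutI.of (φ := amalgPhi (v1 ^ n1) (v2 ^ n2)) true (ULift.up v1) := by
      rw [ha]
      exact (QuotientGroup.lift_mk' _ _ _).trans (amalgHom_inl _ _ _)
    have hFb : amalgQuotHom (v1 ^ n1) (v2 ^ n2) b =
        PushoutI.of (φ := amalgPhi (v1 ^ n1) (v2 ^ n2)) false (ULift.up v2) := by
      rw [hb]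
      exact (QuotientGroup.lift_mk' _ _ _).trans (amalgHom_inr _ _ _)
    rw [map_mul, map_mul, hFa, hFb] at hF
    exact pushout_not_commute htU htV v1 v2 hv1 hv2 n1 n2 hn1 hn2 hu hv hF
  have hnc : ¬ IsMulCommutative C := by
    intro hcomm
    exact hab (Subgroup.mul_comm_of_mem_isMulCommutative C haC hbC)
  refine ⟨hnc, fun hcyc => hnc ?_⟩
  haveI := hcyc
  letI : CommGroup C := IsCyclic.commGroup
  exact ⟨⟨fun x y => mul_comm x y⟩⟩
end

section
/- Let H be a torsion-free group, let w1, w2 ∈ H be nontrivial elements, let n1, n2 ≥ 2 be integers, and set u = w1^{n1} and v = w2^{n2}, assumed nontrivial. Let W = (H * ⟨t⟩)/⟪tut⁻¹v⁻¹⟫ be the cyclic HNN extension of H identifying u with v, where ⟨t⟩ is an infinite cyclic group. Then the centralizer in W of the image of u is not abelian; in particular it is not cyclic. -/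
/-- The generator `t` of the infinite cyclic group `⟨t⟩ = Multiplicative ℤ`. -/
def tGen : Multiplicative ℤ := Multiplicative.ofAdd 1

/-- The cyclic HNN extension `(H * ⟨t⟩)/⟪t u t⁻¹ v⁻¹⟫` identifying `u` with `v`. -/
def CyclicHNN (H : Type*) [Group H] (u v : H) :=
  Monoid.Coprod H (Multiplicative ℤ) ⧸
    Subgroup.normalClosure
      {Monoid.Coprod.inr tGen * Monoid.Coprod.inl u * (Monoid.Coprod.inr tGen)⁻¹ *
        (Monoid.Coprod.inl v)⁻¹}

instance (H : Type*) [Group H] (u v : H) : Group (CyclicHNN H u v) :=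
  inferInstanceAs (Group (Monoid.Coprod H (Multiplicative ℤ) ⧸
    Subgroup.normalClosure
      {Monoid.Coprod.inr tGen * Monoid.Coprod.inl u * (Monoid.Coprod.inr tGen)⁻¹ *
        (Monoid.Coprod.inl v)⁻¹}))


open Monoid Subgroup Multiplicative Function

noncomputable def zpowEquiv {G : Type*} [Group G] (g : G) (hg : ¬ IsOfFinOrder g) :
    Multiplicative ℤ ≃* Subgroup.zpowers g :=
  MulEquiv.ofBijective
    ((zpowersHom G g).codRestrict (Subgroup.zpowers g)
      (fun n => Subgroup.zpow_mem _ (Subgroup.mem_zpowers g) _))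
    ⟨by
      intro a b h
      have h' : g ^ (toAdd a) = g ^ (toAdd b) := congrArg Subtype.val h
      exact (Multiplicative.toAdd.injective (injective_zpow_iff_not_isOfFinOrder.2 hg h')),
     by
      rintro ⟨x, k, rfl⟩
      exact ⟨Multiplicative.ofAdd k, rfl⟩⟩

lemma zpowEquiv_apply {G : Type*} [Group G] (g : G) (hg : ¬ IsOfFinOrder g) (n : ℤ) :
    (zpowEquiv g hg (Multiplicative.ofAdd n) : G) = g ^ n := rfl

lemma not_mem_zpowers_pow {G : Type*} [Group G] {w : G} (hw : ¬ IsOfFinOrder w)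
    {n : ℕ} (hn : 2 ≤ n) : w ∉ Subgroup.zpowers (w ^ n) := by
  rintro ⟨k, hk⟩
  have h1 : w ^ ((n : ℤ) * k) = w ^ (1 : ℤ) := by
    rw [zpow_mul, zpow_natCast, zpow_one]; exact hk
  have h2 : (n : ℤ) * k = 1 := injective_zpow_iff_not_isOfFinOrder.2 hw h1
  have : (n : ℤ) ≤ 1 := Int.le_of_dvd one_pos ⟨k, h2.symm⟩
  omega

noncomputable def zpowMulEquiv {G : Type*} [Group G] {u v : G}
    (hu : ¬ IsOfFinOrder u) (hv : ¬ IsOfFinOrder v) :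
    Subgroup.zpowers u ≃* Subgroup.zpowers v :=
  (zpowEquiv u hu).symm.trans (zpowEquiv v hv)

lemma zpowMulEquiv_apply {G : Type*} [Group G] {u v : G}
    (hu : ¬ IsOfFinOrder u) (hv : ¬ IsOfFinOrder v) :
    (zpowMulEquiv hu hv ⟨u, Subgroup.mem_zpowers u⟩ : G) = v := by
  have h : (zpowEquiv u hu).symm ⟨u, Subgroup.mem_zpowers u⟩ = Multiplicative.ofAdd 1 := by
    rw [MulEquiv.symm_apply_eq]
    ext
    simpa using (zpowEquiv_apply u hu 1).symm
  simp only [zpowMulEquiv, MulEquiv.trans_apply, h]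
  simpa using zpowEquiv_apply v hv 1

open HNNExtension

/-- Non-commutation in the HNN extension, via Britton's lemma. -/
lemma hnn_noncomm {G : Type*} [Group G] {A B : Subgroup G} (φ : A ≃* B)
    {w1 w2 : G} (hw1A : w1 ∉ A) (hw2B : w2 ∉ B) :
    of w1 * (t⁻¹ * of w2 * t) ≠
      (t⁻¹ * of w2 * t) * (of w1 : HNNExtension G A B φ) := by
  intro heq
  have hchain : List.Chain'
      (fun a b : ℤˣ × G => a.2 ∈ toSubgroup A B a.1 → a.1 = b.1)
      [(-1, w2), (1, w1⁻¹), (-1, w2⁻¹), (1, 1)] := by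
    refine List.isChain_cons_cons.2 ⟨?_, List.isChain_cons_cons.2 ⟨?_, List.isChain_cons_cons.2
      ⟨?_, List.isChain_singleton _⟩⟩⟩
    · intro h; rw [toSubgroup_neg_one] at h; exact absurd h hw2B
    · intro h; rw [toSubgroup_one] at h; exact absurd (A.inv_mem_iff.1 h) hw1A
    · intro h; rw [toSubgroup_neg_one] at h; exact absurd (B.inv_mem_iff.1 h) hw2B
  set w : HNNExtension.NormalWord.ReducedWord G A B :=
    ⟨w1, [(-1, w2), (1, w1⁻¹), (-1, w2⁻¹), (1, 1)], hchain⟩ with hw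
  have hprod : w.prod φ = 1 := by
    rw [hw]
    simp only [HNNExtension.NormalWord.ReducedWord.prod,
      List.map_cons, List.map_nil, List.prod_cons, List.prod_nil,
      Units.val_neg, Units.val_one, zpow_neg, zpow_one, map_one, mul_one, map_inv]
    have h2 : HNNExtension.of w1 * (HNNExtension.t⁻¹ * HNNExtension.of w2 * HNNExtension.t) *
        (HNNExtension.of w1)⁻¹ *
        ((HNNExtension.t⁻¹ : HNNExtension G A B φ) * HNNExtension.of w2 * HNNExtension.t)⁻¹
        = 1 := by
      rw [heq]; group
    group at h2 ⊢
    exact h2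
  have hmem : w.prod φ ∈ (of.range : Subgroup (HNNExtension G A B φ)) := by
    rw [hprod]; exact one_mem _
  have := HNNExtension.ReducedWord.toList_eq_nil_of_mem_of_range φ w hmem
  simp [hw] at this

/-- **Proper powers conjugated in an HNN extension give non-abelian centralizers.** Let `H` be a
torsion-free group, `w1, w2 ∈ H` nontrivial, `n1, n2 ≥ 2`, and `u = w1 ^ n1 ≠ 1`,
`v = w2 ^ n2 ≠ 1`. In the cyclic HNN extension `W = (H * ⟨t⟩)/⟪t u t⁻¹ v⁻¹⟫`, the centralizer
of the image of `u` is not abelian; in particular it is not cyclic. -/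
theorem cyclicHNN_centralizer_not_commutative (H : Type*) [Group H]
    (htH : ∀ g : H, g ≠ 1 → ¬IsOfFinOrder g)
    (w1 w2 : H) (hw1 : w1 ≠ 1) (hw2 : w2 ≠ 1)
    (n1 n2 : ℕ) (hn1 : 2 ≤ n1) (hn2 : 2 ≤ n2)
    (hu : w1 ^ n1 ≠ 1) (hv : w2 ^ n2 ≠ 1) :
    ¬ IsMulCommutative (Subgroup.centralizer
        ({QuotientGroup.mk (Monoid.Coprod.inl (w1 ^ n1))} :
          Set (CyclicHNN H (w1 ^ n1) (w2 ^ n2)))) ∧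
    ¬ IsCyclic (Subgroup.centralizer
        ({QuotientGroup.mk (Monoid.Coprod.inl (w1 ^ n1))} :
          Set (CyclicHNN H (w1 ^ n1) (w2 ^ n2)))) := by
  have hfu : ¬ IsOfFinOrder (w1 ^ n1) := htH _ hu
  have hfv : ¬ IsOfFinOrder (w2 ^ n2) := htH _ hv
  have hfw1 : ¬ IsOfFinOrder w1 := htH _ hw1
  have hfw2 : ¬ IsOfFinOrder w2 := htH _ hw2
  set A := Subgroup.zpowers (w1 ^ n1) with hA
  set B := Subgroup.zpowers (w2 ^ n2) with hB
  let φ : A ≃* B := zpowMulEquiv hfu hfv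
  set N := Subgroup.normalClosure
      {Monoid.Coprod.inr tGen * Monoid.Coprod.inl (w1 ^ n1) * (Monoid.Coprod.inr tGen)⁻¹ *
        (Monoid.Coprod.inl (w2 ^ n2))⁻¹} with hN
  let f0 : Monoid.Coprod H (Multiplicative ℤ) →* HNNExtension H A B φ :=
    Monoid.Coprod.lift HNNExtension.of (zpowersHom _ HNNExtension.t)
  have hf0r : f0 (Monoid.Coprod.inr tGen * Monoid.Coprod.inl (w1 ^ n1) *
      (Monoid.Coprod.inr tGen)⁻¹ * (Monoid.Coprod.inl (w2 ^ n2))⁻¹) = 1 := by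
    have hconj := HNNExtension.equiv_eq_conj (φ := φ) ⟨w1 ^ n1, Subgroup.mem_zpowers _⟩
    rw [zpowMulEquiv_apply hfu hfv] at hconj
    simp only [f0, map_mul, map_inv, Monoid.Coprod.lift_apply_inl, Monoid.Coprod.lift_apply_inr,
      zpowersHom_apply, tGen, toAdd_ofAdd, zpow_one, ← hconj]
    group
  have hker : N ≤ f0.ker := by
    apply Subgroup.normalClosure_le_normal
    intro x hx
    rw [Set.mem_singleton_iff] at hx
    subst hx
    exact hf0r
  let f : CyclicHNN H (w1 ^ n1) (w2 ^ n2) →* HNNExtension H A B φ :=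
    QuotientGroup.lift N f0 hker
  -- elements
  set T : CyclicHNN H (w1 ^ n1) (w2 ^ n2) := QuotientGroup.mk (Monoid.Coprod.inr tGen) with hT
  set U : CyclicHNN H (w1 ^ n1) (w2 ^ n2) :=
    QuotientGroup.mk (Monoid.Coprod.inl (w1 ^ n1)) with hU
  set V : CyclicHNN H (w1 ^ n1) (w2 ^ n2) :=
    QuotientGroup.mk (Monoid.Coprod.inl (w2 ^ n2)) with hV
  set X : CyclicHNN H (w1 ^ n1) (w2 ^ n2) := QuotientGroup.mk (Monoid.Coprod.inl w1) with hX
  set W2 : CyclicHNN H (w1 ^ n1) (w2 ^ n2) := QuotientGroup.mk (Monoid.Coprod.inl w2) with hW2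
  set Y : CyclicHNN H (w1 ^ n1) (w2 ^ n2) := T⁻¹ * W2 * T with hY
  have hrel : T * U * T⁻¹ = V := by
    have h1 : (QuotientGroup.mk (Monoid.Coprod.inr tGen * Monoid.Coprod.inl (w1 ^ n1) *
        (Monoid.Coprod.inr tGen)⁻¹ * (Monoid.Coprod.inl (w2 ^ n2))⁻¹) :
        CyclicHNN H (w1 ^ n1) (w2 ^ n2)) = 1 :=
      (QuotientGroup.eq_one_iff _).2 (Subgroup.subset_normalClosure rfl)
    have h2 : T * U * T⁻¹ * V⁻¹ = 1 := h1
    rw [mul_inv_eq_one] at h2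
    exact h2
  -- membership in the centralizer
  have hXmem : X ∈ Subgroup.centralizer {U} := by
    rw [Subgroup.mem_centralizer_iff]
    rintro g rfl
    show U * X = X * U
    show (QuotientGroup.mk (Monoid.Coprod.inl (w1 ^ n1) * Monoid.Coprod.inl w1) :
        CyclicHNN H (w1 ^ n1) (w2 ^ n2)) =
      QuotientGroup.mk (Monoid.Coprod.inl w1 * Monoid.Coprod.inl (w1 ^ n1))
    rw [← map_mul, ← map_mul,
      ← pow_succ, ← pow_succ']
  have hYmem : Y ∈ Subgroup.centralizer {U} := by
    rw [Subgroup.mem_centralizer_iff]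
    rintro g rfl
    show U * Y = Y * U
    have hU' : U = T⁻¹ * V * T := by rw [← hrel]; group
    have hcomm : V * W2 = W2 * V := by
      show (QuotientGroup.mk (Monoid.Coprod.inl (w2 ^ n2) * Monoid.Coprod.inl w2) :
          CyclicHNN H (w1 ^ n1) (w2 ^ n2)) =
        QuotientGroup.mk (Monoid.Coprod.inl w2 * Monoid.Coprod.inl (w2 ^ n2))
      rw [← map_mul, ← map_mul,
        ← pow_succ, ← pow_succ']
    rw [hY, hU']
    calc T⁻¹ * V * T * (T⁻¹ * W2 * T)
        = T⁻¹ * (V * W2) * T := by group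
      _ = T⁻¹ * (W2 * V) * T := by rw [hcomm]
      _ = T⁻¹ * W2 * T * (T⁻¹ * V * T) := by group
  -- non-commutation
  have hfX : f X = HNNExtension.of w1 := by
    show f0 (Monoid.Coprod.inl w1) = _
    simp [f0]
  have hfW2 : f W2 = HNNExtension.of w2 := by
    show f0 (Monoid.Coprod.inl w2) = _
    simp [f0]
  have hfT : f T = HNNExtension.t := by
    show f0 (Monoid.Coprod.inr tGen) = _
    simp [f0, tGen]
  have hfY : f Y = HNNExtension.t⁻¹ * HNNExtension.of w2 * HNNExtension.t := by
    rw [hY, map_mul, map_mul, map_inv, hfT, hfW2]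
  have hXY : X * Y ≠ Y * X := by
    intro h
    have : f X * f Y = f Y * f X := by rw [← map_mul, ← map_mul, h]
    rw [hfX, hfY] at this
    exact hnn_noncomm φ (not_mem_zpowers_pow hfw1 hn1) (not_mem_zpowers_pow hfw2 hn2) this
  constructor
  · rintro ⟨⟨hcomm⟩⟩
    exact hXY (Subtype.ext_iff.1 (hcomm ⟨X, hXmem⟩ ⟨Y, hYmem⟩))
  · intro hcyc
    have := (@IsCyclic.commGroup _ _ hcyc).mul_comm ⟨X, hXmem⟩ ⟨Y, hYmem⟩
    exact hXY (Subtype.ext_iff.1 this)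
end
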